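/- arXiv:2310.06192 — 4 statements merged into one kernel-verified Lean document; each statement's English description precedes it below -/
import Mathlib

section
/- For all integers k ≥ 2 and m ≥ 3k − 1, the Kneser graph K(m,k) is stackable. -/
/-- A cup-stacking move in graph `G`: all cups from `u` are moved to `v`, where
`u ≠ v`, both have at least one cup, and `dist G u v = C u`. -/
def CupMove {V : Type*} [DecidableEq V] (G : SimpleGraph V) (C C' : V → ℕ) : Prop :=
  ∃ u v : V, u ≠ v ∧ 1 ≤ C u ∧ 1 ≤ C v ∧ G.dist u v = C u ∧
    ∀ w, C' w = if w = u then 0 else if w = v then C u + C v else C w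

/-- `G` is `(C, r)`-stackable: some finite sequence of cup-stacking moves starting
from `C` reaches the configuration with all `|C|` cups on `r` and none elsewhere. -/
def IsStackableConf {V : Type*} [Fintype V] [DecidableEq V]
    (G : SimpleGraph V) (C : V → ℕ) (r : V) : Prop :=
  Relation.ReflTransGen (CupMove G) C (fun w => if w = r then ∑ v, C v else 0)

/-- `G` is `r`-stackable: `(𝟏, r)`-stackable where `𝟏` has one cup on each vertex. -/
def IsStackableAt {V : Type*} [Fintype V] [DecidableEq V]
    (G : SimpleGraph V) (r : V) : Prop :=
  IsStackableConf G (fun _ => 1) r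

/-- `G` is stackable: `r`-stackable for every vertex `r`. -/
def IsStackable {V : Type*} [Fintype V] [DecidableEq V] (G : SimpleGraph V) : Prop :=
  ∀ r : V, IsStackableAt G r

/-- The Kneser graph K(m,k): vertices are the k-element subsets of {1,…,m},
adjacent iff disjoint. -/
def kneserGraph (m k : ℕ) : SimpleGraph {A : Finset (Fin m) // A.card = k} :=
  SimpleGraph.fromRel (fun A B => Disjoint A.1 B.1)


namespace CupAux


set_option linter.unusedSectionVars false

attribute [local instance] Classical.propDecidable

variable {V : Type*} [Fintype V] [DecidableEq V]

/-- A matching presented as a total involution: fixed points are unmatched vertices. -/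
def IsIM (G : SimpleGraph V) (f : V → V) : Prop :=
  Function.Involutive f ∧ ∀ v, f v ≠ v → G.Adj v (f v)

/-- The number of unmatched vertices. -/
noncomputable def defect (f : V → V) : ℕ :=
  (Finset.univ.filter (fun v => f v = v)).card

lemma exists_min_im (G : SimpleGraph V) :
    ∃ f, IsIM G f ∧ ∀ g, IsIM G g → defect f ≤ defect g := by
  classical
  have hne : ((Finset.univ : Finset (V → V)).filter (fun f => IsIM G f)).Nonempty := by
    refine ⟨id, ?_⟩
    rw [Finset.mem_filter]; exact ⟨Finset.mem_univ _, fun x => rfl, fun v h => absurd rfl h⟩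
  obtain ⟨f, hf, hmin⟩ := Finset.exists_min_image _ defect hne
  simp only [Finset.mem_filter, Finset.mem_univ, true_and] at hf
  refine ⟨f, hf, fun g hg => hmin g (by simp [hg])⟩

lemma augment_edge (G : SimpleGraph V) (f : V → V) (hf : IsIM G f) {u v : V}
    (hadj : G.Adj u v) (hu : f u = u) (hv : f v = v) :
    ∃ f', IsIM G f' ∧ defect f' + 2 = defect f := by
  have huv : u ≠ v := G.ne_of_adj hadj
  refine ⟨fun x => if x = u then v else if x = v then u else f x, ⟨?_, ?_⟩, ?_⟩
  · intro x
    dsimp only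
    by_cases hxu : x = u
    · subst hxu; rw [if_pos rfl, if_neg huv.symm, if_pos rfl]
    · by_cases hxv : x = v
      · subst hxv; rw [if_neg hxu, if_pos rfl, if_pos rfl]
      · have h1 : f x ≠ u := fun h => hxu (by rw [← hu, ← h, hf.1])
        have h2 : f x ≠ v := fun h => hxv (by rw [← hv, ← h, hf.1])
        rw [if_neg hxu, if_neg hxv, if_neg h1, if_neg h2, hf.1]
  · intro x hx
    dsimp only at hx ⊢
    by_cases hxu : x = u
    · subst hxu; rw [if_pos rfl]; exact hadj
    · by_cases hxv : x = v
      · subst hxv; rw [if_neg hxu, if_pos rfl]; exact hadj.symm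
      · rw [if_neg hxu, if_neg hxv] at hx ⊢; exact hf.2 x hx
  · have hset : (Finset.univ.filter
        (fun x => (if x = u then v else if x = v then u else f x) = x))
        = ((Finset.univ.filter (fun x => f x = x)).erase u).erase v := by
      ext x
      by_cases hxu : x = u
      · subst hxu; simp [huv, huv.symm]
      · by_cases hxv : x = v
        · subst hxv; simp [huv, huv.symm]
        · simp [hxu, hxv]
    rw [defect, hset]
    have hvmem : v ∈ (Finset.univ.filter (fun x => f x = x)).erase u := by
      simp [hv, huv.symm]
    have humem : u ∈ Finset.univ.filter (fun x => f x = x) := by simp [hu]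
    have h1 := Finset.card_erase_add_one hvmem
    have h2 := Finset.card_erase_add_one humem
    unfold defect
    omega

section Walk

variable (f g : V → V) (u : V)

/-- The alternating walk: apply `g`, then `f`, then `g`, ... -/
def wseq : ℕ → V
  | 0 => u
  | n + 1 => (if n % 2 = 0 then g else f) (wseq n)

lemma wseq_step (n : ℕ) :
    wseq f g u (n + 1) = (if n % 2 = 0 then g else f) (wseq f g u n) := rfl

/-- The walk halts at `n` when the next application is a fixed point. -/
def halts (n : ℕ) : Prop := wseq f g u (n + 1) = wseq f g u n

variable {f g u}

lemma wseq_back (hf : Function.Involutive f) (hg : Function.Involutive g) (n : ℕ) :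
    (if n % 2 = 0 then g else f) (wseq f g u (n + 1)) = wseq f g u n := by
  rw [wseq_step]
  split
  · exact hg _
  · exact hf _

lemma wseq_inj (hf : Function.Involutive f) (hg : Function.Involutive g) (hu : f u = u) :
    ∀ j i, i < j → (∀ i' < j, ¬ halts f g u i') → wseq f g u i ≠ wseq f g u j := by
  intro j
  induction j using Nat.strong_induction_on with
  | _ j IH =>
    intro i hij hfree hcol
    obtain ⟨t, rfl⟩ : ∃ t, j = t + 1 := ⟨j - 1, by omega⟩
    by_cases hit : i = t
    · exact hfree t (by omega) (by rw [halts, ← hcol, hit])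
    · have hitlt : i < t := by omega
      have key : (if t % 2 = 0 then g else f) (wseq f g u i) = wseq f g u t := by
        rw [hcol]; exact wseq_back hf hg t
      by_cases hi0 : i = 0
      · subst hi0
        by_cases hpar : t % 2 = 0
        · have h1 : wseq f g u 1 = wseq f g u t := by
            rw [← key, if_pos hpar]; rfl
          have ht2 : 1 < t := by
            rcases Nat.eq_or_lt_of_le (Nat.one_le_iff_ne_zero.mpr (by omega : t ≠ 0)) with h | h
            · omega
            · exact h
          exact IH t (by omega) 1 ht2 (fun i' hi' => hfree i' (by omega)) h1
        · have h1 : wseq f g u 0 = wseq f g u t := by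
            rw [← key, if_neg hpar]
            show wseq f g u 0 = f (wseq f g u 0)
            show u = f u
            exact hu.symm
          exact IH t (by omega) 0 hitlt (fun i' hi' => hfree i' (by omega)) h1
      · -- i ≥ 1
        by_cases hpar : t % 2 = i % 2
        · have hstep : (if t % 2 = 0 then g else f) = (if i % 2 = 0 then g else f) := by
            rw [hpar]
          have h1 : wseq f g u (i + 1) = wseq f g u t := by
            rw [← key, hstep, wseq_step]
          have hne : i + 1 ≠ t := by omega
          have hlt : i + 1 < t := by omega
          exact IH t (by omega) (i + 1) hlt (fun i' hi' => hfree i' (by omega)) h1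
        · have hpar' : t % 2 = (i - 1) % 2 := by omega
          have hstep : (if t % 2 = 0 then g else f) = (if (i - 1) % 2 = 0 then g else f) := by
            rw [hpar']
          have h1 : wseq f g u (i - 1) = wseq f g u t := by
            rw [← key, hstep]
            have : i - 1 + 1 = i := by omega
            rw [← this]
            exact (wseq_back hf hg (i - 1)).symm
          exact IH t (by omega) (i - 1) (by omega) (fun i' hi' => hfree i' (by omega)) h1

lemma halts_exists (hf : Function.Involutive f) (hg : Function.Involutive g) (hu : f u = u) :
    ∃ n, halts f g u n := by
  by_contra hc
  push_neg at hc
  have hinj : Function.Injective (fun a : Fin (Fintype.card V + 1) => wseq f g u a.1) := by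
    intro a b hab
    by_contra hne
    rcases Nat.lt_or_ge a.1 b.1 with h | h
    · exact wseq_inj hf hg hu b.1 a.1 h (fun i' _ => hc i') hab
    · have h' : b.1 < a.1 := by
        rcases Nat.eq_or_lt_of_le h with h2 | h2
        · exact absurd (Fin.ext h2.symm) hne
        · exact h2
      exact wseq_inj hf hg hu a.1 b.1 h' (fun i' _ => hc i') hab.symm
  have := Fintype.card_le_of_injective _ hinj
  simp at this

end Walk

section Surgery

variable {f g : V → V} {u : V} {N : ℕ} {G : SimpleGraph V}

lemma seq_succ_even (j : ℕ) (h : j % 2 = 0) :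
    wseq f g u (j + 1) = g (wseq f g u j) := by rw [wseq_step, if_pos h]

lemma seq_succ_odd (j : ℕ) (h : j % 2 = 1) :
    wseq f g u (j + 1) = f (wseq f g u j) := by
  rw [wseq_step, if_neg (by omega)]

lemma g_seq_odd (hg : Function.Involutive g) (j : ℕ) (h : j % 2 = 1) :
    g (wseq f g u j) = wseq f g u (j - 1) := by
  have h1 : j - 1 + 1 = j := by omega
  conv_lhs => rw [← h1, seq_succ_even (j-1) (by omega)]
  rw [hg]

lemma f_seq_even (hf : Function.Involutive f) (j : ℕ) (h : j % 2 = 0) (h0 : j ≠ 0) :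
    f (wseq f g u j) = wseq f g u (j - 1) := by
  have h1 : j - 1 + 1 = j := by omega
  conv_lhs => rw [← h1, seq_succ_odd (j-1) (by omega)]
  rw [hf]

lemma wseq_inj' (hf : Function.Involutive f) (hg : Function.Involutive g) (hu : f u = u)
    (hmin : ∀ i < N, ¬ halts f g u i) :
    ∀ i, i ≤ N → ∀ j, j ≤ N → wseq f g u i = wseq f g u j → i = j := by
  intro i hi j hj hij
  by_contra hne
  rcases Nat.lt_or_ge i j with h | h
  · exact wseq_inj hf hg hu j i h (fun i' hi' => hmin i' (by omega)) hij
  · have : j < i := by omega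
    exact wseq_inj hf hg hu i j this (fun i' hi' => hmin i' (by omega)) hij.symm

/-- index of a vertex on the walk, or `N+1` if not on it -/
noncomputable def widx (f g : V → V) (u : V) (N : ℕ) (x : V) : ℕ :=
  if h : ∃ j, j ≤ N ∧ wseq f g u j = x then Nat.find h else N + 1

lemma widx_le_or (x : V) : (widx f g u N x ≤ N ∧ wseq f g u (widx f g u N x) = x)
    ∨ widx f g u N x = N + 1 := by
  unfold widx
  split
  · next h => exact Or.inl ⟨(Nat.find_spec h).1, (Nat.find_spec h).2⟩
  · exact Or.inr rfl

lemma seq_widx {x : V} (h : widx f g u N x ≤ N) : wseq f g u (widx f g u N x) = x := by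
  rcases widx_le_or (N := N) x with ⟨_, h2⟩ | h1
  · exact h2
  · omega

lemma widx_seq (hf : Function.Involutive f) (hg : Function.Involutive g) (hu : f u = u)
    (hmin : ∀ i < N, ¬ halts f g u i) {j : ℕ} (hj : j ≤ N) :
    widx f g u N (wseq f g u j) = j := by
  have hex : ∃ i, i ≤ N ∧ wseq f g u i = wseq f g u j := ⟨j, hj, rfl⟩
  rw [widx, dif_pos hex]
  have h1 := Nat.find_spec hex
  exact wseq_inj' hf hg hu hmin _ h1.1 j hj h1.2

lemma closure_g (hf : Function.Involutive f) (hg : Function.Involutive g)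
    (hN : halts f g u N) :
    ∀ j ≤ N, ∃ j', j' ≤ N ∧ g (wseq f g u j) = wseq f g u j' := by
  intro j hj
  rcases Nat.even_or_odd j with hpar | hpar
  · have hpar' : j % 2 = 0 := Nat.even_iff.mp hpar
    by_cases hjN : j = N
    · refine ⟨N, le_refl _, ?_⟩
      have hN' : wseq f g u (N + 1) = wseq f g u N := hN
      have h2 : g (wseq f g u N) = wseq f g u N :=
        (seq_succ_even (f := f) (g := g) (u := u) N (by omega : N % 2 = 0)).symm.trans hN'
      rw [hjN]; exact h2
    · exact ⟨j + 1, by omega, (seq_succ_even j hpar').symm⟩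
  · have hpar' : j % 2 = 1 := Nat.odd_iff.mp hpar
    exact ⟨j - 1, by omega, g_seq_odd hg j hpar'⟩

lemma closure_f (hf : Function.Involutive f) (hg : Function.Involutive g) (hu : f u = u)
    (hN : halts f g u N) :
    ∀ j ≤ N, ∃ j', j' ≤ N ∧ f (wseq f g u j) = wseq f g u j' := by
  intro j hj
  rcases Nat.even_or_odd j with hpar | hpar
  · have hpar' : j % 2 = 0 := Nat.even_iff.mp hpar
    by_cases hj0 : j = 0
    · subst hj0; exact ⟨0, by omega, hu⟩
    · exact ⟨j - 1, by omega, f_seq_even hf j hpar' hj0⟩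
  · have hpar' : j % 2 = 1 := Nat.odd_iff.mp hpar
    by_cases hjN : j = N
    · refine ⟨N, le_refl _, ?_⟩
      have hN' : wseq f g u (N + 1) = wseq f g u N := hN
      have h2 : f (wseq f g u N) = wseq f g u N :=
        (seq_succ_odd (f := f) (g := g) (u := u) N (by omega : N % 2 = 1)).symm.trans hN'
      rw [hjN]; exact h2
    · exact ⟨j + 1, by omega, (seq_succ_odd j hpar').symm⟩

lemma widx_out_g (hf : Function.Involutive f) (hg : Function.Involutive g) (hu : f u = u)
    (hN : halts f g u N) {x : V} (hx : ¬ widx f g u N x ≤ N) :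
    ¬ widx f g u N (g x) ≤ N := by
  intro hgx
  apply hx
  have h1 : wseq f g u (widx f g u N (g x)) = g x := seq_widx hgx
  obtain ⟨j', hj', hj'2⟩ := closure_g hf hg hN _ hgx
  rw [h1, hg] at hj'2
  rcases widx_le_or (f := f) (g := g) (u := u) (N := N) x with h | h
  · exact h.1
  · exfalso
    have hex : ∃ j, j ≤ N ∧ wseq f g u j = x := ⟨j', hj', hj'2.symm⟩
    rw [widx, dif_pos hex] at h
    have := Nat.find_spec hex
    omega

lemma widx_out_f (hf : Function.Involutive f) (hg : Function.Involutive g) (hu : f u = u)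
    (hN : halts f g u N) {x : V} (hx : ¬ widx f g u N x ≤ N) :
    ¬ widx f g u N (f x) ≤ N := by
  intro hgx
  apply hx
  have h1 : wseq f g u (widx f g u N (f x)) = f x := seq_widx hgx
  obtain ⟨j', hj', hj'2⟩ := closure_f hf hg hu hN _ hgx
  rw [h1, hf] at hj'2
  rcases widx_le_or (f := f) (g := g) (u := u) (N := N) x with h | h
  · exact h.1
  · exfalso
    have hex : ∃ j, j ≤ N ∧ wseq f g u j = x := ⟨j', hj', hj'2.symm⟩
    rw [widx, dif_pos hex] at h
    have := Nat.find_spec hex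
    omega

end Surgery


section Surgery2

variable {f g : V → V} {u : V} {N : ℕ} {G : SimpleGraph V}

/-- rewiring of `g` along the walk (case `N` even) -/
noncomputable def gsurg (f g : V → V) (u : V) (N : ℕ) : V → V := fun x =>
  if widx f g u N x ≤ N then
    (if widx f g u N x = 0 then x
     else if widx f g u N x % 2 = 1 then wseq f g u (widx f g u N x + 1)
     else wseq f g u (widx f g u N x - 1))
  else g x

/-- rewiring of `f` along the walk (case `N` even) -/
noncomputable def fsurgrew (f g : V → V) (u : V) (N : ℕ) : V → V := fun x =>
  if widx f g u N x ≤ N then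
    (if widx f g u N x = N then x
     else if widx f g u N x % 2 = 0 then wseq f g u (widx f g u N x + 1)
     else wseq f g u (widx f g u N x - 1))
  else f x

/-- augmenting of `f` along the walk (case `N` odd) -/
noncomputable def fsurgaug (f g : V → V) (u : V) (N : ℕ) : V → V := fun x =>
  if widx f g u N x ≤ N then
    (if widx f g u N x % 2 = 0 then wseq f g u (widx f g u N x + 1)
     else wseq f g u (widx f g u N x - 1))
  else f x

lemma gsurg_at (hf : Function.Involutive f) (hg : Function.Involutive g) (hu : f u = u)
    (hmin : ∀ i < N, ¬ halts f g u i) {j : ℕ} (hj : j ≤ N) :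
    gsurg f g u N (wseq f g u j)
      = (if j = 0 then wseq f g u j
         else if j % 2 = 1 then wseq f g u (j + 1) else wseq f g u (j - 1)) := by
  unfold gsurg
  rw [widx_seq hf hg hu hmin hj, if_pos hj]

lemma gsurg_out {x : V} (hx : ¬ widx f g u N x ≤ N) : gsurg f g u N x = g x := by
  unfold gsurg; rw [if_neg hx]

lemma fsurgrew_at (hf : Function.Involutive f) (hg : Function.Involutive g) (hu : f u = u)
    (hmin : ∀ i < N, ¬ halts f g u i) {j : ℕ} (hj : j ≤ N) :
    fsurgrew f g u N (wseq f g u j)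
      = (if j = N then wseq f g u j
         else if j % 2 = 0 then wseq f g u (j + 1) else wseq f g u (j - 1)) := by
  unfold fsurgrew
  rw [widx_seq hf hg hu hmin hj, if_pos hj]

lemma fsurgrew_out {x : V} (hx : ¬ widx f g u N x ≤ N) : fsurgrew f g u N x = f x := by
  unfold fsurgrew; rw [if_neg hx]

lemma fsurgaug_at (hf : Function.Involutive f) (hg : Function.Involutive g) (hu : f u = u)
    (hmin : ∀ i < N, ¬ halts f g u i) {j : ℕ} (hj : j ≤ N) :
    fsurgaug f g u N (wseq f g u j)
      = (if j % 2 = 0 then wseq f g u (j + 1) else wseq f g u (j - 1)) := by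
  unfold fsurgaug
  rw [widx_seq hf hg hu hmin hj, if_pos hj]

lemma fsurgaug_out {x : V} (hx : ¬ widx f g u N x ≤ N) : fsurgaug f g u N x = f x := by
  unfold fsurgaug; rw [if_neg hx]

lemma halts_zero_iff : halts f g u 0 ↔ g u = u := by
  unfold halts
  constructor
  · intro h; simpa [wseq, wseq_step] using h
  · intro h; simp [wseq, wseq_step, h]

lemma surg_g (hf : IsIM G f) (hg : IsIM G g) (hu : f u = u) (hgu : g u ≠ u)
    (hN : halts f g u N) (hmin : ∀ i < N, ¬ halts f g u i) (hNe : N % 2 = 0) :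
    ∃ g₂, IsIM G g₂ ∧ defect g₂ = defect g ∧ g₂ u = u ∧
      (∀ x, g x = x → x ≠ wseq f g u N → g₂ x = x) := by
  have hN2 : 2 ≤ N := by
    rcases Nat.eq_zero_or_pos N with h | h
    · exact absurd (halts_zero_iff.mp (h ▸ hN)) hgu
    · omega
  have hinj := wseq_inj' (N := N) hf.1 hg.1 hu hmin
  have hgN : g (wseq f g u N) = wseq f g u N := by
    have hN' : wseq f g u (N + 1) = wseq f g u N := hN
    exact (seq_succ_even (f := f) (g := g) (u := u) N hNe).symm.trans hN'
  have hwu : wseq f g u 0 = u := rfl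
  -- value helpers
  have val0 : gsurg f g u N u = u := by
    have := gsurg_at (N := N) hf.1 hg.1 hu hmin (Nat.zero_le N)
    rw [if_pos rfl] at this
    rwa [hwu] at this
  have valodd : ∀ {j}, j ≤ N → j % 2 = 1 →
      gsurg f g u N (wseq f g u j) = wseq f g u (j + 1) := by
    intro j hj hp
    rw [gsurg_at hf.1 hg.1 hu hmin hj, if_neg (by omega), if_pos hp]
  have valeven : ∀ {j}, j ≤ N → j % 2 = 0 → j ≠ 0 →
      gsurg f g u N (wseq f g u j) = wseq f g u (j - 1) := by
    intro j hj hp h0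
    rw [gsurg_at hf.1 hg.1 hu hmin hj, if_neg h0, if_neg (by omega)]
  refine ⟨gsurg f g u N, ⟨?_, ?_⟩, ?_, val0, ?_⟩
  · -- involutive
    intro x
    by_cases hx : widx f g u N x ≤ N
    · obtain ⟨j, hj, rfl⟩ : ∃ j, j ≤ N ∧ wseq f g u j = x :=
        ⟨widx f g u N x, hx, seq_widx hx⟩
      by_cases h0 : j = 0
      · subst h0; rw [hwu, val0, val0]
      · rcases Nat.even_or_odd j with hp | hp
        · have hp' : j % 2 = 0 := Nat.even_iff.mp hp
          rw [valeven hj hp' h0, valodd (by omega) (by omega)]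
          congr 1; omega
        · have hp' : j % 2 = 1 := Nat.odd_iff.mp hp
          have hjN : j + 1 ≤ N := by omega
          rw [valodd hj hp', valeven hjN (by omega) (by omega)]
          congr 1
    · rw [gsurg_out hx, gsurg_out (widx_out_g hf.1 hg.1 hu hN hx), hg.1]
  · -- adjacency
    intro x hx
    by_cases hxm : widx f g u N x ≤ N
    · obtain ⟨j, hj, rfl⟩ : ∃ j, j ≤ N ∧ wseq f g u j = x :=
        ⟨widx f g u N x, hxm, seq_widx hxm⟩
      by_cases h0 : j = 0
      · exfalso; apply hx; subst h0; rw [hwu, val0]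
      · rcases Nat.even_or_odd j with hp | hp
        · have hp' : j % 2 = 0 := Nat.even_iff.mp hp
          rw [valeven hj hp' h0] at hx ⊢
          have hfe : f (wseq f g u (j - 1)) = wseq f g u j := by
            have h1 : j - 1 + 1 = j := by omega
            conv_rhs => rw [← h1]
            exact (seq_succ_odd (j - 1) (by omega)).symm
          have hne : f (wseq f g u (j - 1)) ≠ wseq f g u (j - 1) := by
            rw [hfe]; intro hcol
            have := hinj j hj (j - 1) (by omega) hcol
            omega
          have := (hf.2 _ hne)
          rw [hfe] at this
          exact this.symm
        · have hp' : j % 2 = 1 := Nat.odd_iff.mp hp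
          have hjN : j + 1 ≤ N := by omega
          rw [valodd hj hp'] at hx ⊢
          have hfe : f (wseq f g u j) = wseq f g u (j + 1) :=
            (seq_succ_odd j hp').symm
          have hne : f (wseq f g u j) ≠ wseq f g u j := by
            rw [hfe]; intro hcol
            have := hinj (j + 1) hjN j hj hcol
            omega
          have := hf.2 _ hne
          rwa [hfe] at this
    · rw [gsurg_out hxm] at hx ⊢
      exact hg.2 x hx
  · -- defect
    have hFS : Finset.univ.filter (fun x => gsurg f g u N x = x)
        = insert u ((Finset.univ.filter (fun x => g x = x)).erase (wseq f g u N)) := by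
      ext x
      simp only [Finset.mem_filter, Finset.mem_insert, Finset.mem_erase, Finset.mem_univ,
        true_and]
      by_cases hx : widx f g u N x ≤ N
      · obtain ⟨j, hj, rfl⟩ : ∃ j, j ≤ N ∧ wseq f g u j = x :=
          ⟨widx f g u N x, hx, seq_widx hx⟩
        by_cases h0 : j = 0
        · subst h0
          constructor
          · intro _; exact Or.inl hwu
          · intro _; rw [hwu]; exact val0
        · have hxu : wseq f g u j ≠ u := by
            rw [← hwu]; intro hcol
            exact h0 (hinj j hj 0 (by omega) hcol)
          constructor
          · intro hfix
            exfalso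
            rcases Nat.even_or_odd j with hp | hp
            · have hp' : j % 2 = 0 := Nat.even_iff.mp hp
              rw [valeven hj hp' h0] at hfix
              have := hinj (j - 1) (by omega) j hj hfix
              omega
            · have hp' : j % 2 = 1 := Nat.odd_iff.mp hp
              rw [valodd hj hp'] at hfix
              have := hinj (j + 1) (by omega) j hj hfix
              omega
          · rintro (hcol | ⟨hne, hfix⟩)
            · exact absurd hcol hxu
            · exfalso
              rcases Nat.even_or_odd j with hp | hp
              · have hp' : j % 2 = 0 := Nat.even_iff.mp hp
                have hjN : j ≠ N := fun h => hne (by rw [h])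
                have : g (wseq f g u j) = wseq f g u (j + 1) :=
                  (seq_succ_even j hp').symm
                rw [this] at hfix
                have := hinj (j + 1) (by omega) j hj hfix
                omega
              · have hp' : j % 2 = 1 := Nat.odd_iff.mp hp
                have : g (wseq f g u j) = wseq f g u (j - 1) := g_seq_odd hg.1 j hp'
                rw [this] at hfix
                have := hinj (j - 1) (by omega) j hj hfix
                omega
      · have hu_idx : widx f g u N u = 0 := widx_seq hf.1 hg.1 hu hmin (Nat.zero_le N)
        have hxu : x ≠ u := fun h => hx (by rw [h, hu_idx]; omega)
        have hxN : x ≠ wseq f g u N := fun h => hx (by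
          rw [h, widx_seq hf.1 hg.1 hu hmin (le_refl N)])
        rw [gsurg_out hx]
        constructor
        · intro hfix; exact Or.inr ⟨hxN, hfix⟩
        · rintro (h | ⟨_, hfix⟩)
          · exact absurd h hxu
          · exact hfix
    rw [defect, defect, hFS]
    have hnm : u ∉ (Finset.univ.filter (fun x => g x = x)).erase (wseq f g u N) := by
      simp only [Finset.mem_erase, Finset.mem_filter, Finset.mem_univ, true_and]
      rintro ⟨-, h⟩; exact hgu h
    have hNm : wseq f g u N ∈ Finset.univ.filter (fun x => g x = x) := by
      simp [hgN]
    rw [Finset.card_insert_of_notMem hnm]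
    have := Finset.card_erase_add_one hNm
    omega
  · -- preservation
    intro x hfix hne
    by_cases hx : widx f g u N x ≤ N
    · exfalso
      obtain ⟨j, hj, rfl⟩ : ∃ j, j ≤ N ∧ wseq f g u j = x :=
        ⟨widx f g u N x, hx, seq_widx hx⟩
      by_cases h0 : j = 0
      · subst h0; rw [hwu] at hfix; exact hgu hfix
      · rcases Nat.even_or_odd j with hp | hp
        · have hp' : j % 2 = 0 := Nat.even_iff.mp hp
          have hjN : j ≠ N := fun h => hne (by rw [h])
          have : g (wseq f g u j) = wseq f g u (j + 1) := (seq_succ_even j hp').symm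
          rw [this] at hfix
          have := hinj (j + 1) (by omega) j hj hfix
          omega
        · have hp' : j % 2 = 1 := Nat.odd_iff.mp hp
          have : g (wseq f g u j) = wseq f g u (j - 1) := g_seq_odd hg.1 j hp'
          rw [this] at hfix
          have := hinj (j - 1) (by omega) j hj hfix
          omega
    · rw [gsurg_out hx]; exact hfix

end Surgery2


section Surgery3

variable {f g : V → V} {u : V} {N : ℕ} {G : SimpleGraph V}

lemma surg_f_rew (hf : IsIM G f) (hg : IsIM G g) (hu : f u = u) (hgu : g u ≠ u)
    (hN : halts f g u N) (hmin : ∀ i < N, ¬ halts f g u i) (hNe : N % 2 = 0) :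
    ∃ f₂, IsIM G f₂ ∧ defect f₂ = defect f ∧ f₂ (wseq f g u N) = wseq f g u N ∧
      (∀ x, f x = x → x ≠ u → f₂ x = x) := by
  have hN2 : 2 ≤ N := by
    rcases Nat.eq_zero_or_pos N with h | h
    · exact absurd (halts_zero_iff.mp (h ▸ hN)) hgu
    · omega
  have hinj := wseq_inj' (N := N) hf.1 hg.1 hu hmin
  have hwu : wseq f g u 0 = u := rfl
  have valN : fsurgrew f g u N (wseq f g u N) = wseq f g u N := by
    rw [fsurgrew_at hf.1 hg.1 hu hmin (le_refl N), if_pos rfl]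
  have valeven : ∀ {j}, j ≤ N → j % 2 = 0 → j ≠ N →
      fsurgrew f g u N (wseq f g u j) = wseq f g u (j + 1) := by
    intro j hj hp hjN
    rw [fsurgrew_at hf.1 hg.1 hu hmin hj, if_neg hjN, if_pos hp]
  have valodd : ∀ {j}, j ≤ N → j % 2 = 1 →
      fsurgrew f g u N (wseq f g u j) = wseq f g u (j - 1) := by
    intro j hj hp
    rw [fsurgrew_at hf.1 hg.1 hu hmin hj, if_neg (by omega), if_neg (by omega)]
  have gedge : ∀ {j}, j ≤ N → j % 2 = 0 → g (wseq f g u j) = wseq f g u (j + 1) := by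
    intro j hj hp
    exact (seq_succ_even j hp).symm
  have fedgeodd : ∀ {j}, j ≤ N → j % 2 = 1 → j ≠ N → f (wseq f g u j) = wseq f g u (j + 1) := by
    intro j hj hp hjN
    exact (seq_succ_odd j hp).symm
  refine ⟨fsurgrew f g u N, ⟨?_, ?_⟩, ?_, valN, ?_⟩
  · -- involutive
    intro x
    by_cases hx : widx f g u N x ≤ N
    · obtain ⟨j, hj, rfl⟩ : ∃ j, j ≤ N ∧ wseq f g u j = x :=
        ⟨widx f g u N x, hx, seq_widx hx⟩
      by_cases hjN : j = N
      · rw [hjN, valN, valN]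
      · rcases Nat.even_or_odd j with hp | hp
        · have hp' : j % 2 = 0 := Nat.even_iff.mp hp
          rw [valeven hj hp' hjN, valodd (by omega) (by omega)]
          congr 1
        · have hp' : j % 2 = 1 := Nat.odd_iff.mp hp
          rw [valodd hj hp', valeven (by omega) (by omega) (by omega)]
          congr 1; omega
    · rw [fsurgrew_out hx, fsurgrew_out (widx_out_f hf.1 hg.1 hu hN hx), hf.1]
  · -- adjacency
    intro x hx
    by_cases hxm : widx f g u N x ≤ N
    · obtain ⟨j, hj, rfl⟩ : ∃ j, j ≤ N ∧ wseq f g u j = x :=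
        ⟨widx f g u N x, hxm, seq_widx hxm⟩
      by_cases hjN : j = N
      · exfalso; apply hx; rw [hjN, valN]
      · rcases Nat.even_or_odd j with hp | hp
        · have hp' : j % 2 = 0 := Nat.even_iff.mp hp
          rw [valeven hj hp' hjN] at hx ⊢
          have hge := gedge hj hp'
          have hne : g (wseq f g u j) ≠ wseq f g u j := by
            rw [hge]; intro hcol
            have := hinj (j + 1) (by omega) j hj hcol
            omega
          have := hg.2 _ hne
          rwa [hge] at this
        · have hp' : j % 2 = 1 := Nat.odd_iff.mp hp
          rw [valodd hj hp'] at hx ⊢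
          have hge : g (wseq f g u (j - 1)) = wseq f g u j := by
            have h1 : j - 1 + 1 = j := by omega
            conv_rhs => rw [← h1]
            exact (seq_succ_even (j - 1) (by omega)).symm
          have hne : g (wseq f g u (j - 1)) ≠ wseq f g u (j - 1) := by
            rw [hge]; intro hcol
            have := hinj j hj (j - 1) (by omega) hcol
            omega
          have := hg.2 _ hne
          rw [hge] at this
          exact this.symm
    · rw [fsurgrew_out hxm] at hx ⊢
      exact hf.2 x hx
  · -- defect
    have hFS : Finset.univ.filter (fun x => fsurgrew f g u N x = x)
        = insert (wseq f g u N) ((Finset.univ.filter (fun x => f x = x)).erase u) := by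
      ext x
      simp only [Finset.mem_filter, Finset.mem_insert, Finset.mem_erase, Finset.mem_univ,
        true_and]
      by_cases hx : widx f g u N x ≤ N
      · obtain ⟨j, hj, rfl⟩ : ∃ j, j ≤ N ∧ wseq f g u j = x :=
          ⟨widx f g u N x, hx, seq_widx hx⟩
        by_cases hjN : j = N
        · constructor
          · intro _; exact Or.inl (by rw [hjN])
          · intro _; rw [hjN]; exact valN
        · have hxN : wseq f g u j ≠ wseq f g u N := by
            intro hcol; exact hjN (hinj j hj N (le_refl N) hcol)
          constructor
          · intro hfix
            exfalso
            rcases Nat.even_or_odd j with hp | hp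
            · have hp' : j % 2 = 0 := Nat.even_iff.mp hp
              rw [valeven hj hp' hjN] at hfix
              have := hinj (j + 1) (by omega) j hj hfix
              omega
            · have hp' : j % 2 = 1 := Nat.odd_iff.mp hp
              rw [valodd hj hp'] at hfix
              have := hinj (j - 1) (by omega) j hj hfix
              omega
          · rintro (hcol | ⟨hne, hfix⟩)
            · exact absurd hcol hxN
            · exfalso
              by_cases h0 : j = 0
              · apply hne; rw [h0]; exact hwu
              · rcases Nat.even_or_odd j with hp | hp
                · have hp' : j % 2 = 0 := Nat.even_iff.mp hp
                  rw [f_seq_even hf.1 j hp' h0] at hfix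
                  have := hinj (j - 1) (by omega) j hj hfix
                  omega
                · have hp' : j % 2 = 1 := Nat.odd_iff.mp hp
                  rw [fedgeodd hj hp' hjN] at hfix
                  have := hinj (j + 1) (by omega) j hj hfix
                  omega
      · have hu_idx : widx f g u N u = 0 := widx_seq hf.1 hg.1 hu hmin (Nat.zero_le N)
        have hxu : x ≠ u := fun h => hx (by rw [h, hu_idx]; omega)
        have hxN : x ≠ wseq f g u N := fun h => hx (by
          rw [h, widx_seq hf.1 hg.1 hu hmin (le_refl N)])
        rw [fsurgrew_out hx]
        constructor
        · intro hfix; exact Or.inr ⟨hxu, hfix⟩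
        · rintro (h | ⟨_, hfix⟩)
          · exact absurd h hxN
          · exact hfix
    rw [defect, defect, hFS]
    have hnm : wseq f g u N ∉ (Finset.univ.filter (fun x => f x = x)).erase u := by
      simp only [Finset.mem_erase, Finset.mem_filter, Finset.mem_univ, true_and]
      rintro ⟨-, h⟩
      rw [f_seq_even hf.1 N hNe (by omega)] at h
      have := hinj (N - 1) (by omega) N (le_refl N) h
      omega
    have hum : u ∈ Finset.univ.filter (fun x => f x = x) := by simp [hu]
    rw [Finset.card_insert_of_notMem hnm]
    have := Finset.card_erase_add_one hum
    omega
  · -- preservation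
    intro x hfix hne
    by_cases hx : widx f g u N x ≤ N
    · obtain ⟨j, hj, rfl⟩ : ∃ j, j ≤ N ∧ wseq f g u j = x :=
        ⟨widx f g u N x, hx, seq_widx hx⟩
      by_cases hjN : j = N
      · rw [hjN]; exact valN
      · exfalso
        by_cases h0 : j = 0
        · apply hne; rw [h0]; exact hwu
        · rcases Nat.even_or_odd j with hp | hp
          · have hp' : j % 2 = 0 := Nat.even_iff.mp hp
            rw [f_seq_even hf.1 j hp' h0] at hfix
            have := hinj (j - 1) (by omega) j hj hfix
            omega
          · have hp' : j % 2 = 1 := Nat.odd_iff.mp hp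
            rw [fedgeodd hj hp' hjN] at hfix
            have := hinj (j + 1) (by omega) j hj hfix
            omega
    · rw [fsurgrew_out hx]; exact hfix

lemma surg_f_aug (hf : IsIM G f) (hg : IsIM G g) (hu : f u = u)
    (hN : halts f g u N) (hmin : ∀ i < N, ¬ halts f g u i) (hNo : N % 2 = 1) :
    ∃ f₂, IsIM G f₂ ∧ defect f₂ + 2 = defect f := by
  have hinj := wseq_inj' (N := N) hf.1 hg.1 hu hmin
  have hwu : wseq f g u 0 = u := rfl
  have hfN : f (wseq f g u N) = wseq f g u N := by
    have hN' : wseq f g u (N + 1) = wseq f g u N := hN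
    exact (seq_succ_odd (f := f) (g := g) (u := u) N hNo).symm.trans hN'
  have valeven : ∀ {j}, j ≤ N → j % 2 = 0 →
      fsurgaug f g u N (wseq f g u j) = wseq f g u (j + 1) := by
    intro j hj hp
    rw [fsurgaug_at hf.1 hg.1 hu hmin hj, if_pos hp]
  have valodd : ∀ {j}, j ≤ N → j % 2 = 1 →
      fsurgaug f g u N (wseq f g u j) = wseq f g u (j - 1) := by
    intro j hj hp
    rw [fsurgaug_at hf.1 hg.1 hu hmin hj, if_neg (by omega)]
  have gedge : ∀ {j}, j ≤ N → j % 2 = 0 → g (wseq f g u j) = wseq f g u (j + 1) := by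
    intro j hj hp
    exact (seq_succ_even j hp).symm
  refine ⟨fsurgaug f g u N, ⟨?_, ?_⟩, ?_⟩
  · -- involutive
    intro x
    by_cases hx : widx f g u N x ≤ N
    · obtain ⟨j, hj, rfl⟩ : ∃ j, j ≤ N ∧ wseq f g u j = x :=
        ⟨widx f g u N x, hx, seq_widx hx⟩
      rcases Nat.even_or_odd j with hp | hp
      · have hp' : j % 2 = 0 := Nat.even_iff.mp hp
        rw [valeven hj hp', valodd (by omega) (by omega)]
        congr 1
      · have hp' : j % 2 = 1 := Nat.odd_iff.mp hp
        rw [valodd hj hp', valeven (by omega) (by omega)]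
        congr 1; omega
    · rw [fsurgaug_out hx, fsurgaug_out (widx_out_f hf.1 hg.1 hu hN hx), hf.1]
  · -- adjacency
    intro x hx
    by_cases hxm : widx f g u N x ≤ N
    · obtain ⟨j, hj, rfl⟩ : ∃ j, j ≤ N ∧ wseq f g u j = x :=
        ⟨widx f g u N x, hxm, seq_widx hxm⟩
      rcases Nat.even_or_odd j with hp | hp
      · have hp' : j % 2 = 0 := Nat.even_iff.mp hp
        rw [valeven hj hp'] at hx ⊢
        have hge := gedge hj hp'
        have hne : g (wseq f g u j) ≠ wseq f g u j := by
          rw [hge]; intro hcol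
          have := hinj (j + 1) (by omega) j hj hcol
          omega
        have := hg.2 _ hne
        rwa [hge] at this
      · have hp' : j % 2 = 1 := Nat.odd_iff.mp hp
        rw [valodd hj hp'] at hx ⊢
        have hge : g (wseq f g u (j - 1)) = wseq f g u j := by
          have h1 : j - 1 + 1 = j := by omega
          conv_rhs => rw [← h1]
          exact (seq_succ_even (j - 1) (by omega)).symm
        have hne : g (wseq f g u (j - 1)) ≠ wseq f g u (j - 1) := by
          rw [hge]; intro hcol
          have := hinj j hj (j - 1) (by omega) hcol
          omega
        have := hg.2 _ hne
        rw [hge] at this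
        exact this.symm
    · rw [fsurgaug_out hxm] at hx ⊢
      exact hf.2 x hx
  · -- defect
    have hFS : Finset.univ.filter (fun x => fsurgaug f g u N x = x)
        = ((Finset.univ.filter (fun x => f x = x)).erase u).erase (wseq f g u N) := by
      ext x
      simp only [Finset.mem_filter, Finset.mem_erase, Finset.mem_univ, true_and]
      by_cases hx : widx f g u N x ≤ N
      · obtain ⟨j, hj, rfl⟩ : ∃ j, j ≤ N ∧ wseq f g u j = x :=
          ⟨widx f g u N x, hx, seq_widx hx⟩
        constructor
        · intro hfix
          exfalso
          rcases Nat.even_or_odd j with hp | hp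
          · have hp' : j % 2 = 0 := Nat.even_iff.mp hp
            rw [valeven hj hp'] at hfix
            have := hinj (j + 1) (by omega) j hj hfix
            omega
          · have hp' : j % 2 = 1 := Nat.odd_iff.mp hp
            rw [valodd hj hp'] at hfix
            have := hinj (j - 1) (by omega) j hj hfix
            omega
        · rintro ⟨hneN, hneu, hfix⟩
          exfalso
          by_cases h0 : j = 0
          · apply hneu; rw [h0]; exact hwu
          · by_cases hjN : j = N
            · apply hneN; rw [hjN]
            · rcases Nat.even_or_odd j with hp | hp
              · have hp' : j % 2 = 0 := Nat.even_iff.mp hp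
                rw [f_seq_even hf.1 j hp' h0] at hfix
                have := hinj (j - 1) (by omega) j hj hfix
                omega
              · have hp' : j % 2 = 1 := Nat.odd_iff.mp hp
                have hfe : f (wseq f g u j) = wseq f g u (j + 1) :=
                  (seq_succ_odd j hp').symm
                rw [hfe] at hfix
                have := hinj (j + 1) (by omega) j hj hfix
                omega
      · have hu_idx : widx f g u N u = 0 := widx_seq hf.1 hg.1 hu hmin (Nat.zero_le N)
        have hxu : x ≠ u := fun h => hx (by rw [h, hu_idx]; omega)
        have hxN : x ≠ wseq f g u N := fun h => hx (by
          rw [h, widx_seq hf.1 hg.1 hu hmin (le_refl N)])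
        rw [fsurgaug_out hx]
        constructor
        · intro hfix; exact ⟨hxN, hxu, hfix⟩
        · rintro ⟨-, -, hfix⟩; exact hfix
    rw [defect, defect, hFS]
    have hum : u ∈ Finset.univ.filter (fun x => f x = x) := by simp [hu]
    have hNm : wseq f g u N ∈ (Finset.univ.filter (fun x => f x = x)).erase u := by
      simp only [Finset.mem_erase, Finset.mem_filter, Finset.mem_univ, true_and]
      refine ⟨?_, hfN⟩
      intro hcol
      have : wseq f g u N = wseq f g u 0 := by rw [hcol]; rfl
      have := hinj N (le_refl N) 0 (by omega) this
      omega
    have h1 := Finset.card_erase_add_one hNm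
    have h2 := Finset.card_erase_add_one hum
    omega

end Surgery3


section Gallai
variable {G : SimpleGraph V}

theorem exists_plan (r : V)
    (H1 : ∀ u v : V, u ≠ v → ¬ G.Adj u v → ∃ w, G.Adj u w ∧ G.Adj v w)
    (HT : ∀ f : V → V, IsIM G f → ∀ x y : V, f x = x →
      ∃ f', IsIM G f' ∧ defect f' = defect f ∧ f' y = y) :
    ∃ f : V → V, Function.Involutive f ∧ f r = r ∧
      (∀ x, f x ≠ x → G.Adj x (f x)) ∧ (∀ x, f x = x → x ≠ r → G.Adj x r) := by
  obtain ⟨f₀, hf₀, hmin₀⟩ := exists_min_im G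
  have hdle : defect f₀ ≤ 1 := by
    by_contra hgt
    push_neg at hgt
    obtain ⟨u, hu', v, hv', huv⟩ :=
      Finset.one_lt_card.mp (by rw [defect] at hgt; omega :
        1 < (Finset.univ.filter (fun x => f₀ x = x)).card)
    simp only [Finset.mem_filter, Finset.mem_univ, true_and] at hu' hv'
    by_cases hadj : G.Adj u v
    · obtain ⟨f', hf', hdef⟩ := augment_edge G f₀ hf₀ hadj hu' hv'
      have := hmin₀ f' hf'
      omega
    · obtain ⟨w, huw, hvw⟩ := H1 u v huv hadj
      obtain ⟨g₀, hg₀, hgdef, hgw⟩ := HT f₀ hf₀ u w hu'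
      by_cases hg₀u : g₀ u = u
      · obtain ⟨g', hg', hdef⟩ := augment_edge G g₀ hg₀ huw hg₀u hgw
        have := hmin₀ g' hg'
        omega
      · have Hex : ∃ n, halts f₀ g₀ u n := halts_exists hf₀.1 hg₀.1 hu'
        have hN : halts f₀ g₀ u (Nat.find Hex) := Nat.find_spec Hex
        have hmin : ∀ i < Nat.find Hex, ¬ halts f₀ g₀ u i := fun i hi => Nat.find_min Hex hi
        rcases Nat.even_or_odd (Nat.find Hex) with hNe | hNo
        · have hNe' : Nat.find Hex % 2 = 0 := Nat.even_iff.mp hNe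
          by_cases hwN : wseq f₀ g₀ u (Nat.find Hex) = w
          · obtain ⟨f₂, hf₂, hdef₂, hfix₂, hpres₂⟩ :=
              surg_f_rew hf₀ hg₀ hu' hg₀u hN hmin hNe'
            have hvP : f₂ v = v := hpres₂ v hv' huv.symm
            have hWfix : f₂ w = w := by rw [← hwN]; exact hfix₂
            obtain ⟨f₃, hf₃, hdef₃⟩ := augment_edge G f₂ hf₂ hvw hvP hWfix
            have h1 := hmin₀ f₃ hf₃
            omega
          · obtain ⟨g₂, hg₂, hdef₂, hfixu, hpres₂⟩ :=
              surg_g hf₀ hg₀ hu' hg₀u hN hmin hNe'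
            have hWfix : g₂ w = w := hpres₂ w hgw (fun h => hwN h.symm)
            obtain ⟨g₃, hg₃, hdef₃⟩ := augment_edge G g₂ hg₂ huw hfixu hWfix
            have h1 := hmin₀ g₃ hg₃
            omega
        · have hNo' : Nat.find Hex % 2 = 1 := Nat.odd_iff.mp hNo
          obtain ⟨f₂, hf₂, hdef₂⟩ := surg_f_aug hf₀ hg₀ hu' hN hmin hNo'
          have := hmin₀ f₂ hf₂
          omega
  rcases Nat.le_one_iff_eq_zero_or_eq_one.mp hdle with h0 | h1
  · -- perfect matching: unpair r
    have hnofix : ∀ x : V, f₀ x ≠ x := by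
      intro x hx
      have hxm : x ∈ Finset.univ.filter (fun y => f₀ y = y) := by simp [hx]
      rw [defect, Finset.card_eq_zero] at h0
      rw [h0] at hxm
      exact absurd hxm (Finset.notMem_empty x)
    have hfr : f₀ r ≠ r := hnofix r
    refine ⟨fun x => if x = r ∨ x = f₀ r then x else f₀ x, ?_, ?_, ?_, ?_⟩
    · intro x
      dsimp only
      by_cases hx : x = r ∨ x = f₀ r
      · rw [if_pos hx, if_pos hx]
      · push_neg at hx
        have h1 : f₀ x ≠ r := fun h => hx.2 (by rw [← h, hf₀.1])
        have h2 : f₀ x ≠ f₀ r := fun h => hx.1 (by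
          have := congrArg f₀ h
          rwa [hf₀.1, hf₀.1] at this)
        rw [if_neg (not_or.mpr hx), if_neg (not_or.mpr ⟨h1, h2⟩), hf₀.1]
    · dsimp only
      rw [if_pos (Or.inl rfl)]
    · intro x hx
      dsimp only at hx ⊢
      by_cases hc : x = r ∨ x = f₀ r
      · rw [if_pos hc] at hx; exact absurd rfl hx
      · rw [if_neg hc] at hx ⊢
        exact hf₀.2 x hx
    · intro x hfix hxr
      dsimp only at hfix
      by_cases hc : x = r ∨ x = f₀ r
      · rcases hc with hc | hc
        · exact absurd hc hxr
        · rw [hc]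
          exact (hf₀.2 r hfr).symm
      · rw [if_neg hc] at hfix
        exact absurd hfix (hnofix x)
  · obtain ⟨x₀, hx₀⟩ := Finset.card_eq_one.mp (h1 : defect f₀ = 1)
    have hx₀fix : f₀ x₀ = x₀ := by
      have hm : x₀ ∈ Finset.univ.filter (fun x => f₀ x = x) := by rw [hx₀]; simp
      simpa using hm
    obtain ⟨f₁, hf₁, hdef₁, hfr⟩ := HT f₀ hf₀ x₀ r hx₀fix
    have hcard1 : (Finset.univ.filter (fun x => f₁ x = x)).card = 1 := by
      have : defect f₁ = 1 := by rw [hdef₁, h1]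
      exact this
    obtain ⟨y₀, hy₀⟩ := Finset.card_eq_one.mp hcard1
    have hyr : y₀ = r := by
      have hm : r ∈ Finset.univ.filter (fun x => f₁ x = x) := by simp [hfr]
      rw [hy₀] at hm
      exact (Finset.mem_singleton.mp hm).symm
    refine ⟨f₁, hf₁.1, hfr, hf₁.2, ?_⟩
    intro x hfix hxr
    exfalso
    have hm : x ∈ Finset.univ.filter (fun z => f₁ z = z) := by simp [hfix]
    rw [hy₀] at hm
    exact hxr ((Finset.mem_singleton.mp hm).trans hyr)

end Gallai


end CupAux

namespace CupExec

variable {V : Type*} [Fintype V] [DecidableEq V] {G : SimpleGraph V}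

/-- configuration during execution: unprocessed vertices hold 1 cup, `r` holds the rest -/
def conf (r : V) (T : Finset V) : V → ℕ := fun x =>
  if x ∈ T then 1 else if x = r then Fintype.card V - T.card else 0

lemma conf_mem {r : V} {T : Finset V} {x : V} (hx : x ∈ T) : conf r T x = 1 := by
  unfold conf; rw [if_pos hx]

lemma conf_r {r : V} {T : Finset V} (hr : r ∉ T) :
    conf r T r = Fintype.card V - T.card := by
  unfold conf; rw [if_neg hr, if_pos rfl]

lemma sub_ne_r {r : V} {T : Finset V} (hT : T ⊆ Finset.univ.erase r) : r ∉ T :=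
  fun h => (Finset.mem_erase.mp (hT h)).1 rfl

lemma card_lt {r : V} {T : Finset V} (hT : T ⊆ Finset.univ.erase r) :
    T.card < Fintype.card V := by
  have h1 : T.card ≤ (Finset.univ.erase r).card := Finset.card_le_card hT
  have h2 : (Finset.univ.erase r).card + 1 = Finset.univ.card :=
    Finset.card_erase_add_one (Finset.mem_univ r)
  rw [Finset.card_univ] at h2
  omega

lemma solo_step (r : V) {T : Finset V} (hT : T ⊆ Finset.univ.erase r) {x : V}
    (hx : x ∈ T) (hadj : G.Adj x r) :
    CupMove G (conf r T) (conf r (T.erase x)) := by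
  have hxr : x ≠ r := (Finset.mem_erase.mp (hT hx)).1
  have hrT : r ∉ T := sub_ne_r hT
  have hcard := card_lt hT
  have hTpos : 1 ≤ T.card := Finset.card_pos.mpr ⟨x, hx⟩
  have hce : (T.erase x).card + 1 = T.card := Finset.card_erase_add_one hx
  refine ⟨x, r, hxr, ?_, ?_, ?_, ?_⟩
  · rw [conf_mem hx]
  · rw [conf_r hrT]; omega
  · rw [conf_mem hx]
    exact SimpleGraph.dist_eq_one_iff_adj.mpr hadj
  · intro w
    by_cases hwx : w = x
    · subst hwx
      rw [if_pos rfl]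
      unfold conf
      rw [if_neg (Finset.notMem_erase w T), if_neg hxr]
    · rw [if_neg hwx]
      by_cases hwr : w = r
      · subst hwr
        rw [if_pos rfl, conf_mem hx, conf_r hrT, conf_r (fun h => hrT (Finset.mem_of_mem_erase h))]
        omega
      · rw [if_neg hwr]
        unfold conf
        rw [if_neg hwr, if_neg hwr]
        have : w ∈ T.erase x ↔ w ∈ T := by
          rw [Finset.mem_erase]
          exact ⟨fun h => h.2, fun h => ⟨hwx, h⟩⟩
        by_cases hw : w ∈ T
        · rw [if_pos hw, if_pos (this.mpr hw)]
        · rw [if_neg hw, if_neg (fun h => hw (this.mp h))]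

lemma pair_step (r : V) {T : Finset V} (hT : T ⊆ Finset.univ.erase r) {x y : V}
    (hx : x ∈ T) (hy : y ∈ T) (hxy : x ≠ y) (hadjxy : G.Adj x y)
    (hdisty : G.dist y r = 2) :
    ∃ mid, CupMove G (conf r T) mid ∧ CupMove G mid (conf r ((T.erase x).erase y)) := by
  have hxr : x ≠ r := (Finset.mem_erase.mp (hT hx)).1
  have hyr : y ≠ r := (Finset.mem_erase.mp (hT hy)).1
  have hrT : r ∉ T := sub_ne_r hT
  have hcard := card_lt hT
  have hT2 : 2 ≤ T.card := by
    have := Finset.one_lt_card.mpr ⟨x, hx, y, hy, hxy⟩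
    omega
  refine ⟨fun w => if w = x then 0 else if w = y then 2 else conf r T w, ⟨x, y, hxy, ?_, ?_, ?_, ?_⟩, ⟨y, r, hyr, ?_, ?_, ?_, ?_⟩⟩
  · rw [conf_mem hx]
  · rw [conf_mem hy]
  · rw [conf_mem hx]
    exact SimpleGraph.dist_eq_one_iff_adj.mpr hadjxy
  · intro w
    dsimp only
    by_cases hwx : w = x
    · rw [if_pos hwx, if_pos hwx]
    · rw [if_neg hwx, if_neg hwx]
      by_cases hwy : w = y
      · rw [if_pos hwy, if_pos hwy, conf_mem hx, conf_mem hy]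
      · rw [if_neg hwy, if_neg hwy]
  · dsimp only
    rw [if_neg (Ne.symm hxy), if_pos rfl]
    omega
  · dsimp only
    rw [if_neg (Ne.symm hxr), if_neg (Ne.symm hyr), conf_r hrT]
    omega
  · dsimp only
    rw [if_neg (Ne.symm hxy), if_pos rfl, hdisty]
  · intro w
    dsimp only
    by_cases hwy : w = y
    · subst hwy
      rw [if_pos rfl]
      unfold conf
      rw [if_neg (Finset.notMem_erase w _), if_neg hyr]
    · rw [if_neg hwy]
      by_cases hwr : w = r
      · rw [if_pos hwr, if_neg (Ne.symm hxy), if_pos rfl,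
          if_neg (Ne.symm hxr), if_neg (Ne.symm hyr), conf_r hrT]
        have hrT2 : r ∉ (T.erase x).erase y :=
          fun h => hrT (Finset.mem_of_mem_erase (Finset.mem_of_mem_erase h))
        rw [hwr, conf_r hrT2]
        have h1 : (T.erase x).card + 1 = T.card := Finset.card_erase_add_one hx
        have h2 : ((T.erase x).erase y).card + 1 = (T.erase x).card :=
          Finset.card_erase_add_one (Finset.mem_erase.mpr ⟨Ne.symm hxy, hy⟩)
        omega
      · rw [if_neg hwr]
        by_cases hwx : w = x
        · rw [if_pos hwx]
          unfold conf
          have hnm : w ∉ (T.erase x).erase y := by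
            rw [hwx]
            intro h
            exact Finset.notMem_erase x T (Finset.mem_of_mem_erase h)
          rw [if_neg hnm, if_neg hwr]
        · rw [if_neg hwx, if_neg hwy]
          unfold conf
          rw [if_neg hwr, if_neg hwr]
          have : w ∈ (T.erase x).erase y ↔ w ∈ T := by
            rw [Finset.mem_erase, Finset.mem_erase]
            exact ⟨fun h => h.2.2, fun h => ⟨hwy, hwx, h⟩⟩
          by_cases hw : w ∈ T
          · rw [if_pos hw, if_pos (this.mpr hw)]
          · rw [if_neg hw, if_neg (fun h => hw (this.mp h))]


lemma exec_aux (r : V)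
    (HD2 : ∀ x : V, x ≠ r → ¬ G.Adj x r → G.dist x r = 2)
    (f : V → V) (hinv : Function.Involutive f)
    (hadjf : ∀ x, f x ≠ x → G.Adj x (f x)) (hfix : ∀ x, f x = x → x ≠ r → G.Adj x r) :
    ∀ n (T : Finset V), T.card ≤ n → T ⊆ Finset.univ.erase r →
      (∀ x ∈ T, f x ∈ T) →
      Relation.ReflTransGen (CupMove G) (conf r T) (conf r ∅) := by
  intro n
  induction n with
  | zero =>
    intro T hc _ _
    rw [Finset.card_eq_zero.mp (Nat.le_zero.mp hc)]
  | succ n IH =>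
    intro T hc hsub hclosed
    rcases T.eq_empty_or_nonempty with rfl | ⟨x, hx⟩
    · exact Relation.ReflTransGen.refl
    · have hxr : x ≠ r := (Finset.mem_erase.mp (hsub hx)).1
      by_cases hfx : f x = x
      · -- solo fire
        have hadjxr : G.Adj x r := hfix x hfx hxr
        have hstep := solo_step r hsub hx hadjxr
        have hclosed' : ∀ z ∈ T.erase x, f z ∈ T.erase x := by
          intro z hz
          obtain ⟨hzx, hzT⟩ := Finset.mem_erase.mp hz
          refine Finset.mem_erase.mpr ⟨?_, hclosed z hzT⟩
          intro h
          exact hzx (by rw [← hinv z, h, hfx])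
        have hcard : (T.erase x).card ≤ n := by
          have := Finset.card_erase_add_one hx
          omega
        exact Relation.ReflTransGen.head hstep
          (IH (T.erase x) hcard (fun z hz => hsub (Finset.mem_of_mem_erase hz)) hclosed')
      · -- paired
        have hyT : f x ∈ T := hclosed x hx
        have hyx : f x ≠ x := hfx
        have hyr : f x ≠ r := (Finset.mem_erase.mp (hsub hyT)).1
        have hadjxy : G.Adj x (f x) := hadjf x hfx
        have hclosed2 : ∀ z ∈ (T.erase x).erase (f x), f z ∈ (T.erase x).erase (f x) := by
          intro z hz
          obtain ⟨hzy, hz2⟩ := Finset.mem_erase.mp hz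
          obtain ⟨hzx, hzT⟩ := Finset.mem_erase.mp hz2
          refine Finset.mem_erase.mpr ⟨?_, Finset.mem_erase.mpr ⟨?_, hclosed z hzT⟩⟩
          · intro h
            exact hzx (by rw [← hinv z, h, hinv])
          · intro h
            exact hzy (by rw [← hinv z, h])
        have hcard2 : ((T.erase x).erase (f x)).card ≤ n := by
          have h1 := Finset.card_erase_add_one hx
          have h2 := Finset.card_le_card (Finset.erase_subset (f x) (T.erase x))
          omega
        have hsub2 : (T.erase x).erase (f x) ⊆ Finset.univ.erase r :=
          fun z hz => hsub (Finset.mem_of_mem_erase (Finset.mem_of_mem_erase hz))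
        have htail := IH _ hcard2 hsub2 hclosed2
        by_cases hyadj : G.Adj (f x) r
        · by_cases hxadj : G.Adj x r
          · -- both adjacent to r: two solo fires
            have hstep1 := solo_step r hsub hx hxadj
            have hy' : f x ∈ T.erase x := Finset.mem_erase.mpr ⟨hyx, hyT⟩
            have hstep2 := solo_step r
              (fun z hz => hsub (Finset.mem_of_mem_erase hz)) hy' hyadj
            exact Relation.ReflTransGen.head hstep1
              (Relation.ReflTransGen.head hstep2 htail)
          · -- fire x, fueled by f x
            have hdx : G.dist x r = 2 := HD2 x hxr hxadj
            obtain ⟨mid, hm1, hm2⟩ := pair_step r hsub hyT hx hyx hadjxy.symm hdx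
            have hre : (T.erase (f x)).erase x = (T.erase x).erase (f x) := by
              rw [Finset.erase_right_comm]
            rw [hre] at hm2
            exact Relation.ReflTransGen.head hm1 (Relation.ReflTransGen.head hm2 htail)
        · -- fire f x, fueled by x
          have hdy : G.dist (f x) r = 2 := HD2 (f x) hyr hyadj
          obtain ⟨mid, hm1, hm2⟩ := pair_step r hsub hx hyT (Ne.symm hyx) hadjxy hdy
          exact Relation.ReflTransGen.head hm1 (Relation.ReflTransGen.head hm2 htail)

theorem stackable_of_plan (r : V)
    (HD2 : ∀ x : V, x ≠ r → ¬ G.Adj x r → G.dist x r = 2)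
    (f : V → V) (hinv : Function.Involutive f) (hfr : f r = r)
    (hadjf : ∀ x, f x ≠ x → G.Adj x (f x)) (hfix : ∀ x, f x = x → x ≠ r → G.Adj x r) :
    IsStackableAt G r := by
  have h0 : conf r (Finset.univ.erase r) = (fun _ => (1 : ℕ)) := by
    funext x
    unfold conf
    by_cases hx : x ∈ Finset.univ.erase r
    · rw [if_pos hx]
    · have hxr : x = r := by
        by_contra h
        exact hx (Finset.mem_erase.mpr ⟨h, Finset.mem_univ x⟩)
      rw [if_neg hx, if_pos hxr, Finset.card_erase_of_mem (Finset.mem_univ r),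
        Finset.card_univ]
      have h1 : 1 ≤ Fintype.card V := Fintype.card_pos_iff.mpr ⟨r⟩
      omega
  have h1 : conf r (∅ : Finset V) = (fun w => if w = r then ∑ _v : V, (1:ℕ) else 0) := by
    funext x
    unfold conf
    rw [if_neg (Finset.notMem_empty x)]
    by_cases hxr : x = r
    · rw [if_pos hxr, if_pos hxr, Finset.card_empty, Finset.sum_const, Finset.card_univ,
        smul_eq_mul, mul_one, Nat.sub_zero]
    · rw [if_neg hxr, if_neg hxr]
  have hclosed0 : ∀ x ∈ Finset.univ.erase r, f x ∈ Finset.univ.erase r := by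
    intro x hxm
    refine Finset.mem_erase.mpr ⟨?_, Finset.mem_univ _⟩
    intro h
    exact (Finset.mem_erase.mp hxm).1 (by rw [← hinv x, h, hfr])
  have hmain := exec_aux r HD2 f hinv hadjf hfix (Finset.univ.erase r).card
      (Finset.univ.erase r) (le_refl _) (Finset.Subset.refl _) hclosed0
  rw [h0, h1] at hmain
  exact hmain

end CupExec

namespace KneserAux

open CupAux

variable {m k : ℕ}

abbrev KV (m k : ℕ) := {A : Finset (Fin m) // A.card = k}

lemma adj_iff {A B : KV m k} :
    (kneserGraph m k).Adj A B ↔ A ≠ B ∧ Disjoint A.1 B.1 := by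
  unfold kneserGraph
  rw [SimpleGraph.fromRel_adj]
  constructor
  · rintro ⟨h1, h2 | h2⟩
    · exact ⟨h1, h2⟩
    · exact ⟨h1, h2.symm⟩
  · rintro ⟨h1, h2⟩
    exact ⟨h1, Or.inl h2⟩

lemma disj_ne (hk : 1 ≤ k) {A B : KV m k} (h : Disjoint A.1 B.1) : A ≠ B := by
  intro hEq
  subst hEq
  rw [Finset.disjoint_self_iff_empty] at h
  have := A.2
  rw [h, Finset.card_empty] at this
  omega

lemma exists_common (hk : 2 ≤ k) (hm : 3 * k - 1 ≤ m) (A B : KV m k)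
    (h : ¬ Disjoint A.1 B.1) :
    ∃ C : KV m k, Disjoint C.1 A.1 ∧ Disjoint C.1 B.1 := by
  have hinter : 1 ≤ (A.1 ∩ B.1).card := by
    rw [Finset.not_disjoint_iff_nonempty_inter] at h
    exact Finset.card_pos.mpr h
  have hunion : (A.1 ∪ B.1).card + (A.1 ∩ B.1).card = 2 * k := by
    rw [Finset.card_union_add_card_inter, A.2, B.2]; ring
  have hcompl : k ≤ ((A.1 ∪ B.1)ᶜ).card := by
    rw [Finset.card_compl, Fintype.card_fin]
    omega
  obtain ⟨t, hts, htc⟩ := Finset.exists_subset_card_eq hcompl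
  refine ⟨⟨t, htc⟩, ?_, ?_⟩
  · rw [Finset.disjoint_left]
    intro a hat haA
    have := hts hat
    rw [Finset.mem_compl] at this
    exact this (Finset.mem_union_left _ haA)
  · rw [Finset.disjoint_left]
    intro a hat haB
    have := hts hat
    rw [Finset.mem_compl] at this
    exact this (Finset.mem_union_right _ haB)

lemma H1 (hk : 2 ≤ k) (hm : 3 * k - 1 ≤ m) :
    ∀ u v : KV m k, u ≠ v → ¬ (kneserGraph m k).Adj u v →
      ∃ w, (kneserGraph m k).Adj u w ∧ (kneserGraph m k).Adj v w := by
  intro u v huv hnadj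
  have hnd : ¬ Disjoint u.1 v.1 := fun hd => hnadj (adj_iff.mpr ⟨huv, hd⟩)
  obtain ⟨C, hCu, hCv⟩ := exists_common hk hm u v hnd
  exact ⟨C, adj_iff.mpr ⟨(disj_ne (by omega) hCu).symm, hCu.symm⟩,
    adj_iff.mpr ⟨(disj_ne (by omega) hCv).symm, hCv.symm⟩⟩

lemma HD2 (hk : 2 ≤ k) (hm : 3 * k - 1 ≤ m) (r : KV m k) :
    ∀ x : KV m k, x ≠ r → ¬ (kneserGraph m k).Adj x r → (kneserGraph m k).dist x r = 2 := by
  intro x hxr hnadj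
  obtain ⟨w, hxw, hrw⟩ := H1 hk hm x r hxr hnadj
  have hle : (kneserGraph m k).dist x r ≤ 2 := by
    have := SimpleGraph.dist_le (SimpleGraph.Walk.cons hxw hrw.symm.toWalk)
    simpa [SimpleGraph.Adj.toWalk, SimpleGraph.Walk.length_cons,
      SimpleGraph.Walk.length_nil] using this
  have hne0 : (kneserGraph m k).dist x r ≠ 0 := by
    intro h
    rw [SimpleGraph.dist_eq_zero_iff_eq_or_not_reachable] at h
    rcases h with h | h
    · exact hxr h
    · exact h ⟨SimpleGraph.Walk.cons hxw hrw.symm.toWalk⟩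
  have hne1 : (kneserGraph m k).dist x r ≠ 1 := by
    intro h
    exact hnadj (SimpleGraph.dist_eq_one_iff_adj.mp h)
  omega

/-- a permutation of `Fin m` carrying one `k`-set to another -/
lemma exists_perm (s t : Finset (Fin m)) (h : s.card = t.card) :
    ∃ σ : Equiv.Perm (Fin m), ∀ a ∈ s, σ a ∈ t := by
  classical
  have e : {x : Fin m // x ∈ s} ≃ {x : Fin m // x ∈ t} := Finset.equivOfCardEq h
  exact ⟨e.extendSubtype, fun a ha => e.extendSubtype_mem a ha⟩

/-- graph automorphism of the Kneser graph from a permutation -/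
noncomputable def permEquiv (σ : Equiv.Perm (Fin m)) : KV m k ≃ KV m k where
  toFun A := ⟨A.1.image σ, by rw [Finset.card_image_of_injective _ σ.injective, A.2]⟩
  invFun A := ⟨A.1.image σ.symm, by rw [Finset.card_image_of_injective _ σ.symm.injective, A.2]⟩
  left_inv A := by
    apply Subtype.ext
    simp only [Finset.image_image]
    rw [Equiv.symm_comp_self, Finset.image_id]
  right_inv A := by
    apply Subtype.ext
    simp only [Finset.image_image]
    rw [Equiv.self_comp_symm, Finset.image_id]

lemma permEquiv_adj (σ : Equiv.Perm (Fin m)) (A B : KV m k) :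
    (kneserGraph m k).Adj (permEquiv σ A) (permEquiv σ B) ↔ (kneserGraph m k).Adj A B := by
  rw [adj_iff, adj_iff]
  constructor
  · rintro ⟨h1, h2⟩
    refine ⟨fun hEq => h1 (by rw [hEq]), ?_⟩
    have := (Finset.disjoint_image σ.injective).mp h2
    exact this
  · rintro ⟨h1, h2⟩
    refine ⟨fun hEq => h1 ((permEquiv σ).injective hEq), ?_⟩
    exact (Finset.disjoint_image σ.injective).mpr h2

lemma permEquiv_maps (hk : 1 ≤ k) (x y : KV m k) :
    ∃ σ : Equiv.Perm (Fin m), permEquiv σ x = y := by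
  obtain ⟨σ, hσ⟩ := exists_perm x.1 y.1 (by rw [x.2, y.2])
  refine ⟨σ, Subtype.ext ?_⟩
  have hsub : x.1.image σ ⊆ y.1 := by
    intro a ha
    obtain ⟨b, hb, rfl⟩ := Finset.mem_image.mp ha
    exact hσ b hb
  apply Finset.eq_of_subset_of_card_le hsub
  rw [Finset.card_image_of_injective _ σ.injective, x.2, y.2]

attribute [local instance] Classical.propDecidable

lemma HT_kneser (hk : 1 ≤ k) :
    ∀ f : KV m k → KV m k, IsIM (kneserGraph m k) f → ∀ x y : KV m k, f x = x →
      ∃ f', IsIM (kneserGraph m k) f' ∧ defect f' = defect f ∧ f' y = y := by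
  intro f hf x y hfx
  obtain ⟨σ, hσ⟩ := permEquiv_maps hk x y
  set Φ := permEquiv (m := m) (k := k) σ with hΦ
  refine ⟨fun A => Φ (f (Φ.symm A)), ⟨?_, ?_⟩, ?_, ?_⟩
  · intro A
    dsimp only
    rw [Equiv.symm_apply_apply, hf.1, Equiv.apply_symm_apply]
  · intro A hA
    dsimp only at hA ⊢
    have h1 : f (Φ.symm A) ≠ Φ.symm A := by
      intro h
      apply hA
      rw [h, Equiv.apply_symm_apply]
    have h2 := (permEquiv_adj σ (Φ.symm A) (f (Φ.symm A))).mpr (hf.2 _ h1)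
    rwa [Equiv.apply_symm_apply] at h2
  · have hset : Finset.univ.filter (fun A => Φ (f (Φ.symm A)) = A)
        = (Finset.univ.filter (fun A => f A = A)).image Φ := by
      ext A
      simp only [Finset.mem_filter, Finset.mem_univ, true_and, Finset.mem_image]
      constructor
      · intro hA
        refine ⟨Φ.symm A, ?_, by rw [Equiv.apply_symm_apply]⟩
        have := congrArg Φ.symm hA
        rwa [Equiv.symm_apply_apply] at this
      · rintro ⟨B, hB, rfl⟩
        rw [Equiv.symm_apply_apply, hB]
    show defect (fun A => Φ (f (Φ.symm A))) = defect f
    rw [defect, defect, hset, Finset.card_image_of_injective _ Φ.injective]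
  · dsimp only
    have hx' : Φ.symm y = x := by rw [← hσ, Equiv.symm_apply_apply]
    rw [hx', hfx, hσ]


attribute [local instance] Classical.propDecidable

end KneserAux

theorem kneser_stackable (m k : ℕ) (hk : 2 ≤ k) (hm : 3 * k - 1 ≤ m) :
    IsStackable (kneserGraph m k) := by
  intro r
  obtain ⟨f, hinv, hfr, hadjf, hfix⟩ := CupAux.exists_plan r (KneserAux.H1 hk hm)
      (KneserAux.HT_kneser (by omega : 1 ≤ k))
  exact CupExec.stackable_of_plan r (KneserAux.HD2 hk hm r) f hinv hfr hadjf hfix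
end

section
/- Let m > k ≥ 1 and let J(m,k) be the Johnson graph whose vertices are the k-element subsets of {1,…,m}, two subsets A, B being adjacent iff |A ∩ B| = k − 1. If J(m,k) has diameter two (max over pairs of vertices of their distance equals 2), then J(m,k) is stackable. -/
/-- The Johnson graph J(m,k): vertices are the k-element subsets of {1,…,m},
with A adjacent to B iff |A ∩ B| = k - 1. -/
def johnsonGraph (m k : ℕ) : SimpleGraph {A : Finset (Fin m) // A.card = k} :=
  SimpleGraph.fromRel (fun A B => (A.1 ∩ B.1).card = k - 1)


namespace JGaux

/-- vertices of a list of blocks -/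
def bvJS {V : Type*} (L : List (V × Option V)) : List V :=
  L.flatMap (fun b => b.1 :: b.2.toList)

/-- intermediate configuration: `n` cups at `r`, one cup at each element of `l`. -/
def confJS {V : Type*} [DecidableEq V] (r : V) (l : List V) (n : ℕ) : V → ℕ :=
  fun w => if w = r then n else if w ∈ l then 1 else 0

lemma engineJS {V : Type*} [Fintype V] [DecidableEq V] (G : SimpleGraph V) (r : V) :
    ∀ (L : List (V × Option V)) (n : ℕ), 1 ≤ n →
      (bvJS L).Nodup → r ∉ bvJS L →
      (∀ u, (u, (none : Option V)) ∈ L → G.dist u r = 1) →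
      (∀ u v, (u, some v) ∈ L → G.dist v u = 1 ∧ G.dist u r = 2) →
      Relation.ReflTransGen (CupMove G) (confJS r (bvJS L) n)
        (confJS r [] (n + (bvJS L).length))
  | [], n, hn, _, _, _, _ => by
      simp only [bvJS, List.flatMap_nil, List.length_nil, Nat.add_zero]
      exact Relation.ReflTransGen.refl
  | (u, none) :: L, n, hn, hnd, hr, h1, h2 => by
      have hbv : bvJS ((u, none) :: L) = u :: bvJS L := rfl
      rw [hbv] at hnd hr ⊢
      have hur : u ≠ r := fun h => hr (h ▸ List.mem_cons_self)
      have hunl : u ∉ bvJS L := (List.nodup_cons.1 hnd).1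
      have hrl : r ∉ bvJS L := fun h => hr (List.mem_cons_of_mem _ h)
      have hd : G.dist u r = 1 := h1 u (List.mem_cons_self)
      have hC : confJS r (u :: bvJS L) n u = 1 := by
        simp [confJS, hur]
      have step : CupMove G (confJS r (u :: bvJS L) n) (confJS r (bvJS L) (n+1)) := by
        refine ⟨u, r, hur, by rw [hC], by simp only [confJS, if_pos rfl]; exact hn, by rw [hC, hd], ?_⟩
        intro w
        by_cases hwu : w = u
        · subst hwu; simp [confJS, hur, hunl]
        · by_cases hwr : w = r
          · subst hwr; simp [confJS, hur, hur.symm, hC, Nat.add_comm]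
          · simp [confJS, hwu, hwr, List.mem_cons]
      have ih := engineJS G r L (n+1) (by omega) (List.nodup_cons.1 hnd).2 hrl
        (fun a ha => h1 a (List.mem_cons_of_mem _ ha))
        (fun a b hab => h2 a b (List.mem_cons_of_mem _ hab))
      have harith : (n + 1) + (bvJS L).length = n + (u :: bvJS L).length := by
        simp; omega
      exact Relation.ReflTransGen.head step (harith ▸ ih)
  | (u, some v) :: L, n, hn, hnd, hr, h1, h2 => by
      have hbv : bvJS ((u, some v) :: L) = u :: v :: bvJS L := rfl
      rw [hbv] at hnd hr ⊢
      have hur : u ≠ r := fun h => hr (h ▸ List.mem_cons_self)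
      have hvr : v ≠ r := fun h => hr (by rw [← h]; exact List.mem_cons_of_mem _ (List.mem_cons_self))
      have huv : u ≠ v := by
        intro h; exact (List.nodup_cons.1 hnd).1 (h ▸ List.mem_cons_self)
      have hunl : u ∉ bvJS L := fun h => (List.nodup_cons.1 hnd).1 (List.mem_cons_of_mem _ h)
      have hvnl : v ∉ bvJS L := (List.nodup_cons.1 (List.nodup_cons.1 hnd).2).1
      have hrl : r ∉ bvJS L := fun h => hr (List.mem_cons_of_mem _ (List.mem_cons_of_mem _ h))
      obtain ⟨hd1, hd2⟩ := h2 u v (List.mem_cons_self)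
      set C0 := confJS r (u :: v :: bvJS L) n with hC0
      have hC0u : C0 u = 1 := by simp [hC0, confJS, hur]
      have hC0v : C0 v = 1 := by simp [hC0, confJS, hvr, huv.symm]
      set C1 : V → ℕ := fun w => if w = v then 0 else if w = u then C0 v + C0 u else C0 w with hC1
      have step1 : CupMove G C0 C1 := ⟨v, u, huv.symm, by rw [hC0v], by rw [hC0u], by rw [hC0v, hd1], fun w => rfl⟩
      have hC1u : C1 u = 2 := by simp [hC1, huv, hC0u, hC0v]
      have hC1r : C1 r = n := by simp [hC1, hvr.symm, hur.symm, hC0, confJS]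
      have step2 : CupMove G C1 (confJS r (bvJS L) (n+2)) := by
        refine ⟨u, r, hur, by rw [hC1u]; norm_num, by rw [hC1r]; exact hn, by rw [hC1u, hd2], ?_⟩
        intro w
        by_cases hwu : w = u
        · subst hwu; simp [confJS, hur, hunl]
        · by_cases hwr : w = r
          · subst hwr; simp [confJS, hC1r, hC1u, hur, hur.symm, hvr, hvr.symm, Nat.add_comm]
          · by_cases hwv : w = v
            · subst hwv; simp [confJS, hC1, hvnl, hwu, hwr]
            · simp [confJS, hC1, hwu, hwr, hwv, hC0]
      have ih := engineJS G r L (n+2) (by omega)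
        (List.nodup_cons.1 (List.nodup_cons.1 hnd).2).2 hrl
        (fun a ha => h1 a (List.mem_cons_of_mem _ ha))
        (fun a b hab => h2 a b (List.mem_cons_of_mem _ hab))
      have harith : (n + 2) + (bvJS L).length = n + (u :: v :: bvJS L).length := by
        simp; omega
      exact Relation.ReflTransGen.head step1 (Relation.ReflTransGen.head step2 (harith ▸ ih))

lemma jadj {A B : {A : Finset (Fin m) // A.card = k}} :
    (johnsonGraph m k).Adj A B ↔ A ≠ B ∧ (A.1 ∩ B.1).card = k - 1 := by
  rw [johnsonGraph, SimpleGraph.fromRel_adj]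
  constructor
  · rintro ⟨hne, h | h⟩
    · exact ⟨hne, h⟩
    · exact ⟨hne, by rwa [Finset.inter_comm]⟩
  · rintro ⟨hne, h⟩; exact ⟨hne, Or.inl h⟩

lemma inter_le_k (A B : {A : Finset (Fin m) // A.card = k}) :
    (A.1 ∩ B.1).card ≤ k := by
  calc (A.1 ∩ B.1).card ≤ A.1.card := Finset.card_le_card (Finset.inter_subset_left)
  _ = k := A.2

lemma eq_of_inter (A B : {A : Finset (Fin m) // A.card = k})
    (h : (A.1 ∩ B.1).card = k) : A = B := by
  have h1 : A.1 ∩ B.1 = A.1 := Finset.eq_of_subset_of_card_le Finset.inter_subset_left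
    (by rw [h, A.2])
  have h2 : A.1 ⊆ B.1 := by rw [← h1]; exact Finset.inter_subset_right
  exact Subtype.ext (Finset.eq_of_subset_of_card_le h2 (by rw [A.2, B.2]))

lemma walk_bound (hk : 1 ≤ k) {A B : {A : Finset (Fin m) // A.card = k}}
    (W : (johnsonGraph m k).Walk A B) : k ≤ (A.1 ∩ B.1).card + W.length := by
  induction W with
  | nil =>
      simp only [Finset.inter_self, SimpleGraph.Walk.length_nil, Nat.add_zero]
      rename_i u
      exact le_of_eq u.2.symm
  | @cons A C B h p ih =>
      have hAC : (A.1 ∩ C.1).card = k - 1 := (jadj.1 h).2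
      have hCA : (C.1 ∩ A.1).card = k - 1 := by rwa [Finset.inter_comm]
      have hsd : (C.1 \ A.1).card = 1 := by
        have := Finset.card_inter_add_card_sdiff C.1 A.1
        rw [hCA, C.2] at this; omega
      have hsub : C.1 ∩ B.1 ⊆ (A.1 ∩ B.1) ∪ (C.1 \ A.1) := by
        intro x hx
        rw [Finset.mem_inter] at hx
        by_cases hxA : x ∈ A.1
        · exact Finset.mem_union_left _ (Finset.mem_inter.2 ⟨hxA, hx.2⟩)
        · exact Finset.mem_union_right _ (Finset.mem_sdiff.2 ⟨hx.1, hxA⟩)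
      have hle : (C.1 ∩ B.1).card ≤ (A.1 ∩ B.1).card + 1 := by
        calc (C.1 ∩ B.1).card ≤ ((A.1 ∩ B.1) ∪ (C.1 \ A.1)).card := Finset.card_le_card hsub
        _ ≤ (A.1 ∩ B.1).card + (C.1 \ A.1).card := Finset.card_union_le _ _
        _ = (A.1 ∩ B.1).card + 1 := by rw [hsd]
      simp only [SimpleGraph.Walk.length_cons]
      omega

lemma exists_walk (hk : 1 ≤ k) :
    ∀ (d : ℕ) (A B : {A : Finset (Fin m) // A.card = k}),
      k - (A.1 ∩ B.1).card ≤ d →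
      ∃ W : (johnsonGraph m k).Walk A B, W.length ≤ k - (A.1 ∩ B.1).card
  | 0, A, B, hd => by
      have hAB : A = B := eq_of_inter A B (le_antisymm (inter_le_k A B) (by omega))
      subst hAB
      exact ⟨SimpleGraph.Walk.nil, by simp⟩
  | (d+1), A, B, hd => by
      by_cases hAB : A = B
      · subst hAB; exact ⟨SimpleGraph.Walk.nil, by simp⟩
      · have hlt : (A.1 ∩ B.1).card < k := by
          rcases lt_or_eq_of_le (inter_le_k A B) with h | h
          · exact h
          · exact absurd (eq_of_inter A B h) hAB
        have hANB : (A.1 \ B.1).Nonempty := by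
          rw [Finset.sdiff_nonempty]
          intro hsub
          exact hAB (Subtype.ext (Finset.eq_of_subset_of_card_le hsub (by rw [A.2, B.2])))
        have hBNA : (B.1 \ A.1).Nonempty := by
          rw [Finset.sdiff_nonempty]
          intro hsub
          exact hAB (Subtype.ext (Finset.eq_of_subset_of_card_le hsub (by rw [A.2, B.2])).symm)
        obtain ⟨x, hx⟩ := hANB
        obtain ⟨y, hy⟩ := hBNA
        rw [Finset.mem_sdiff] at hx hy
        have hyA : y ∉ A.1 := hy.2
        have hxA : x ∈ A.1 := hx.1
        set Cs : Finset (Fin m) := insert y (A.1.erase x) with hCs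
        have hCcard : Cs.card = k := by
          rw [hCs, Finset.card_insert_of_notMem (fun hmem => hyA (Finset.mem_of_mem_erase hmem)),
            Finset.card_erase_of_mem hxA, A.2]
          omega
        set C : {A : Finset (Fin m) // A.card = k} := ⟨Cs, hCcard⟩ with hC
        have hACi : A.1 ∩ C.1 = A.1.erase x := by
          ext z
          simp only [hC, hCs, Finset.mem_inter, Finset.mem_insert, Finset.mem_erase]
          constructor
          · rintro ⟨hzA, hz⟩
            rcases hz with rfl | hz
            · exact absurd hzA hyA
            · exact hz
          · rintro ⟨hzx, hzA⟩; exact ⟨hzA, Or.inr ⟨hzx, hzA⟩⟩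
        have hACcard : (A.1 ∩ C.1).card = k - 1 := by
          rw [hACi, Finset.card_erase_of_mem hxA, A.2]
        have hAdj : (johnsonGraph m k).Adj A C := by
          rw [jadj]
          refine ⟨fun hEq => ?_, hACcard⟩
          rw [hEq, Finset.inter_self] at hACcard
          rw [C.2] at hACcard
          omega
        have hCBi : C.1 ∩ B.1 = insert y (A.1 ∩ B.1) := by
          ext z
          simp only [hC, hCs, Finset.mem_inter, Finset.mem_insert, Finset.mem_erase]
          constructor
          · rintro ⟨hz1, hzB⟩
            rcases hz1 with rfl | ⟨hzx, hzA⟩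
            · exact Or.inl rfl
            · exact Or.inr ⟨hzA, hzB⟩
          · rintro (rfl | ⟨hzA, hzB⟩)
            · exact ⟨Or.inl rfl, hy.1⟩
            · refine ⟨Or.inr ⟨fun hzx => ?_, hzA⟩, hzB⟩
              subst hzx; exact hx.2 hzB
        have hCBcard : (C.1 ∩ B.1).card = (A.1 ∩ B.1).card + 1 := by
          rw [hCBi, Finset.card_insert_of_notMem]
          intro hmem
          exact hyA (Finset.mem_inter.1 hmem).1
        obtain ⟨W, hW⟩ := exists_walk hk d C B (by omega)
        exact ⟨SimpleGraph.Walk.cons hAdj W, by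
          simp only [SimpleGraph.Walk.length_cons]
          omega⟩

lemma dist_formula (hk : 1 ≤ k) (A B : {A : Finset (Fin m) // A.card = k}) :
    (johnsonGraph m k).dist A B = k - (A.1 ∩ B.1).card := by
  obtain ⟨W, hW⟩ := exists_walk hk (k - (A.1 ∩ B.1).card) A B le_rfl
  have hub : (johnsonGraph m k).dist A B ≤ k - (A.1 ∩ B.1).card :=
    le_trans (SimpleGraph.dist_le W) hW
  have hreach : (johnsonGraph m k).Reachable A B := ⟨W⟩
  obtain ⟨W', hW'⟩ := hreach.exists_walk_length_eq_dist
  have hlb := walk_bound hk W'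
  rw [hW'] at hlb
  have := inter_le_k A B
  omega


/-- Pair up consecutive elements of a list. -/
def pairUp {α : Type*} : List α → List (α × α) × List α
  | a :: b :: l => ((a, b) :: (pairUp l).1, (pairUp l).2)
  | l => ([], l)

def flatP {α : Type*} (P : List (α × α)) : List α := P.flatMap (fun p => [p.1, p.2])

lemma flatP_append {α : Type*} (P Q : List (α × α)) :
    flatP (P ++ Q) = flatP P ++ flatP Q := by
  simp [flatP]

lemma flatP_cons {α : Type*} (p : α × α) (P : List (α × α)) :
    flatP (p :: P) = p.1 :: p.2 :: flatP P := by
  simp [flatP]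

lemma pairUp_flatten {α : Type*} : ∀ l : List α, flatP (pairUp l).1 ++ (pairUp l).2 = l
  | [] => rfl
  | [a] => rfl
  | a :: b :: l => by
      rw [pairUp, flatP_cons]
      simp only [List.cons_append]
      rw [pairUp_flatten l]

lemma pairUp_left_nil {α : Type*} : ∀ l : List α, l.length % 2 = 0 → (pairUp l).2 = []
  | [], _ => rfl
  | [a], h => by simp at h
  | a :: b :: l, h => by
      rw [pairUp]
      exact pairUp_left_nil l (by simp at h; omega)

lemma pairUp_mem {α : Type*} : ∀ l : List α, l.Nodup →
    ∀ p ∈ (pairUp l).1, p.1 ∈ l ∧ p.2 ∈ l ∧ p.1 ≠ p.2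
  | [], _, p, hp => by simp [pairUp] at hp
  | [a], _, p, hp => by simp [pairUp] at hp
  | a :: b :: l, hnd, p, hp => by
      rw [pairUp] at hp
      rcases List.mem_cons.1 hp with rfl | hp
      · refine ⟨List.mem_cons_self, List.mem_cons_of_mem _ (List.mem_cons_self), ?_⟩
        intro h
        simp only at h
        exact (List.nodup_cons.1 hnd).1 (by rw [h]; exact List.mem_cons_self)
      · have hnd' := (List.nodup_cons.1 (List.nodup_cons.1 hnd).2).2
        obtain ⟨h1, h2, h3⟩ := pairUp_mem l hnd' p hp
        exact ⟨List.mem_cons_of_mem _ (List.mem_cons_of_mem _ h1),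
          List.mem_cons_of_mem _ (List.mem_cons_of_mem _ h2), h3⟩

lemma pair_injective (n : ℕ) : Function.Injective (fun i => ({i, n} : Finset ℕ)) := by
  intro i j h
  simp only at h
  have hi : i ∈ ({j, n} : Finset ℕ) := by rw [← h]; exact Finset.mem_insert_self i {n}
  have hj : j ∈ ({i, n} : Finset ℕ) := by rw [h]; exact Finset.mem_insert_self j {n}
  rcases Finset.mem_insert.1 hi with h1 | h1
  · exact h1
  · rcases Finset.mem_insert.1 hj with h2 | h2
    · exact h2.symm
    · rw [Finset.mem_singleton] at h1 h2; rw [h1, h2]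

lemma pair_card {i n : ℕ} (h : i ≠ n) : ({i, n} : Finset ℕ).card = 2 := by
  rw [Finset.card_insert_of_notMem (by simp [h]), Finset.card_singleton]

lemma pair_inter {i j n : ℕ} (hij : i ≠ j) (hi : i ≠ n) (hj : j ≠ n) :
    ({i, n} : Finset ℕ) ∩ {j, n} = {n} := by
  ext x
  simp only [Finset.mem_inter, Finset.mem_insert, Finset.mem_singleton]
  constructor
  · rintro ⟨rfl | rfl, h2⟩
    · rcases h2 with rfl | rfl
      · exact absurd rfl hij
      · rfl
    · rfl
  · rintro rfl; exact ⟨Or.inr rfl, Or.inr rfl⟩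

/-- e is a 2-subset containing n, with other elements < n, then e = {i, n} -/
lemma two_subset_with_max {e : Finset ℕ} {n : ℕ} (hc : e.card = 2)
    (hsub : e ⊆ Finset.range (n+1)) (hn : n ∈ e) :
    ∃ i, i < n ∧ e = {i, n} := by
  have : (e.erase n).card = 1 := by rw [Finset.card_erase_of_mem hn, hc]
  obtain ⟨i, hi⟩ := Finset.card_eq_one.1 this
  have hin : i ∈ e.erase n := hi ▸ Finset.mem_singleton_self i
  have hine : i ≠ n := (Finset.mem_erase.1 hin).1
  have hie : i ∈ e := (Finset.mem_erase.1 hin).2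
  refine ⟨i, ?_, ?_⟩
  · have := hsub hie
    rw [Finset.mem_range] at this
    omega
  · have := Finset.insert_erase hn
    rw [hi] at this
    rw [Finset.pair_comm]
    exact this.symm


lemma perm_helper1 {α : Type*} (a : α) (l1 l2 : List α) :
    (l1 ++ (l2 ++ [a])).Perm ((a :: l1) ++ l2) := by
  rw [← List.append_assoc, List.cons_append]
  exact List.perm_append_singleton a (l1 ++ l2)

lemma perm_helper2 {α : Type*} (a b : α) (l1 l2 : List α) :
    (a :: b :: (l1 ++ l2)).Perm ((a :: l1) ++ (l2 ++ [b])) := by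
  rw [List.cons_append, ← List.append_assoc]
  exact List.Perm.cons a (List.perm_append_singleton b (l1 ++ l2)).symm

lemma pairing_step {n : ℕ} {PL : List (Finset ℕ × Finset ℕ)} {Lo : List (Finset ℕ)}
    (hnd : (flatP PL ++ Lo).Nodup)
    (hmem : ∀ e ∈ flatP PL ++ Lo, e.card = 2 ∧ e ⊆ Finset.range n)
    (hcov : ∀ e : Finset ℕ, e.card = 2 → e ⊆ Finset.range n → e ∈ flatP PL ++ Lo)
    (col' : List (Finset ℕ)) (hcnd : col'.Nodup)
    (hcol : ∀ e ∈ col', n ∈ e ∧ e.card = 2 ∧ e ⊆ Finset.range (n+1))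
    (hccov : ∀ e : Finset ℕ, e.card = 2 → e ⊆ Finset.range (n+1) → n ∈ e → e ∈ col') :
    (col' ++ (flatP PL ++ Lo)).Nodup ∧
    (∀ e ∈ col' ++ (flatP PL ++ Lo), e.card = 2 ∧ e ⊆ Finset.range (n+1)) ∧
    (∀ e : Finset ℕ, e.card = 2 → e ⊆ Finset.range (n+1) → e ∈ col' ++ (flatP PL ++ Lo)) := by
  have hold : ∀ e ∈ flatP PL ++ Lo, n ∉ e := by
    intro e he hne
    have := (hmem e he).2 hne
    rw [Finset.mem_range] at this
    omega
  refine ⟨?_, ?_, ?_⟩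
  · rw [List.nodup_append]
    refine ⟨hcnd, hnd, ?_⟩
    intro e hec e' heo hee
    subst hee
    exact hold e heo (hcol e hec).1
  · intro e he
    rcases List.mem_append.1 he with h | h
    · exact ⟨(hcol e h).2.1, (hcol e h).2.2⟩
    · refine ⟨(hmem e h).1, (hmem e h).2.trans ?_⟩
      exact Finset.range_subset_range.2 (by omega)
  · intro e hc hsub
    by_cases hne : n ∈ e
    · exact List.mem_append.2 (Or.inl (hccov e hc hsub hne))
    · refine List.mem_append.2 (Or.inr (hcov e hc ?_))
      intro x hx
      have := hsub hx
      rw [Finset.mem_range] at this ⊢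
      rcases Nat.lt_succ_iff_lt_or_eq.1 this with h | h
      · exact h
      · exact absurd (h ▸ hx) hne

lemma pairing : ∀ n : ℕ, ∃ (PL : List (Finset ℕ × Finset ℕ)) (Lo : List (Finset ℕ)),
    (flatP PL ++ Lo).Nodup ∧
    (∀ e ∈ flatP PL ++ Lo, e.card = 2 ∧ e ⊆ Finset.range n) ∧
    (∀ e : Finset ℕ, e.card = 2 → e ⊆ Finset.range n → e ∈ flatP PL ++ Lo) ∧
    (∀ p ∈ PL, (p.1 ∩ p.2).card = 1) ∧
    (∀ e ∈ Lo, 0 ∈ e) ∧ Lo.length ≤ 1 := by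
  intro n
  induction n with
  | zero =>
      refine ⟨[], [], by simp [flatP], by simp [flatP], ?_, by simp, by simp, by simp⟩
      intro e hc hsub
      exfalso
      rw [Finset.range_zero, Finset.subset_empty] at hsub
      rw [hsub] at hc
      simp at hc
  | succ n ih =>
      obtain ⟨PL, Lo, hnd, hmem, hcov, hint, h0, hlen⟩ := ih
      -- membership facts and pairwise facts for column-type lists
      by_cases hn2 : n % 2 = 0
      · -- even column: pair up everything, leftover unchanged
        set col : List (Finset ℕ) := (List.range n).map (fun i => ({i, n} : Finset ℕ)) with hcoldef
        have hcolnd : col.Nodup := (List.nodup_range (n := n)).map (pair_injective n)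
        have hcollen : col.length % 2 = 0 := by
          simp only [hcoldef, List.length_map, List.length_range]
          exact hn2
        have hflat : flatP (pairUp col).1 = col := by
          have h1 := pairUp_flatten col
          rw [pairUp_left_nil col hcollen, List.append_nil] at h1
          exact h1
        have hcol : ∀ e ∈ col, n ∈ e ∧ e.card = 2 ∧ e ⊆ Finset.range (n+1) := by
          intro e he
          obtain ⟨i, hi, rfl⟩ := List.mem_map.1 he
          rw [List.mem_range] at hi
          refine ⟨by simp, pair_card (by omega), ?_⟩
          intro x hx
          rcases Finset.mem_insert.1 hx with rfl | hx
          · exact Finset.mem_range.2 (by omega)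
          · rw [Finset.mem_singleton] at hx
            exact Finset.mem_range.2 (by omega)
        have hccov : ∀ e : Finset ℕ, e.card = 2 → e ⊆ Finset.range (n+1) → n ∈ e → e ∈ col := by
          intro e hc hsub hne
          obtain ⟨i, hi, rfl⟩ := two_subset_with_max hc hsub hne
          exact List.mem_map.2 ⟨i, List.mem_range.2 hi, rfl⟩
        obtain ⟨H1, H2, H3⟩ := pairing_step hnd hmem hcov col hcolnd hcol hccov
        refine ⟨(pairUp col).1 ++ PL, Lo, ?_, ?_, ?_, ?_, h0, hlen⟩
        · rwa [flatP_append, hflat, List.append_assoc]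
        · rwa [flatP_append, hflat, List.append_assoc]
        · rw [flatP_append, hflat, List.append_assoc]; exact H3
        · intro p hp
          rcases List.mem_append.1 hp with hp | hp
          · obtain ⟨h1, h2, h3⟩ := pairUp_mem col hcolnd p hp
            obtain ⟨i, hi, hie⟩ := List.mem_map.1 h1
            obtain ⟨j, hj, hje⟩ := List.mem_map.1 h2
            rw [List.mem_range] at hi hj
            have hij : i ≠ j := fun h => h3 (by rw [← hie, ← hje, h])
            rw [← hie, ← hje, pair_inter hij (by omega) (by omega)]
            exact Finset.card_singleton n
          · exact hint p hp
      · -- odd column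
        have hn1 : 1 ≤ n := by omega
        set rest : List (Finset ℕ) := (List.range (n-1)).map (fun i => ({i+1, n} : Finset ℕ))
          with hrestdef
        have hrinj : Function.Injective (fun i => ({i+1, n} : Finset ℕ)) := by
          intro a b hab
          have := pair_injective n hab
          omega
        have hrestnd : rest.Nodup := (List.nodup_range (n := n-1)).map hrinj
        have hrestlen : rest.length % 2 = 0 := by
          simp only [hrestdef, List.length_map, List.length_range]
          omega
        have hflat : flatP (pairUp rest).1 = rest := by
          have h1 := pairUp_flatten rest
          rw [pairUp_left_nil rest hrestlen, List.append_nil] at h1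
          exact h1
        set e0 : Finset ℕ := {0, n} with he0def
        have he0rest : e0 ∉ rest := by
          intro h
          obtain ⟨i, _, hie⟩ := List.mem_map.1 h
          have := pair_injective n hie
          omega
        set col' : List (Finset ℕ) := e0 :: rest with hcol'def
        have hcnd : col'.Nodup := List.nodup_cons.2 ⟨he0rest, hrestnd⟩
        have hcol : ∀ e ∈ col', n ∈ e ∧ e.card = 2 ∧ e ⊆ Finset.range (n+1) := by
          intro e he
          have key : ∃ i, i ≠ n ∧ i < n + 1 ∧ e = {i, n} := by
            rcases List.mem_cons.1 he with rfl | he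
            · exact ⟨0, by omega, by omega, rfl⟩
            · obtain ⟨i, hi, hie⟩ := List.mem_map.1 he
              rw [List.mem_range] at hi
              exact ⟨i+1, by omega, by omega, hie.symm⟩
          obtain ⟨i, hin, hilt, rfl⟩ := key
          refine ⟨by simp, pair_card hin, ?_⟩
          intro x hx
          rcases Finset.mem_insert.1 hx with rfl | hx
          · exact Finset.mem_range.2 (by omega)
          · rw [Finset.mem_singleton] at hx
            exact Finset.mem_range.2 (by omega)
        have hccov : ∀ e : Finset ℕ, e.card = 2 → e ⊆ Finset.range (n+1) → n ∈ e → e ∈ col' := by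
          intro e hc hsub hne
          obtain ⟨i, hi, rfl⟩ := two_subset_with_max hc hsub hne
          rcases Nat.eq_zero_or_pos i with rfl | hipos
          · exact List.mem_cons_self
          · refine List.mem_cons_of_mem _ (List.mem_map.2 ⟨i - 1, List.mem_range.2 (by omega), ?_⟩)
            show ({(i-1)+1, n} : Finset ℕ) = {i, n}
            congr 1
            omega
        obtain ⟨H1, H2, H3⟩ := pairing_step hnd hmem hcov col' hcnd hcol hccov
        have hpairs_cp : ∀ p ∈ (pairUp rest).1, (p.1 ∩ p.2).card = 1 := by
          intro p hp
          obtain ⟨h1, h2, h3⟩ := pairUp_mem rest hrestnd p hp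
          obtain ⟨i, hi, hie⟩ := List.mem_map.1 h1
          obtain ⟨j, hj, hje⟩ := List.mem_map.1 h2
          rw [List.mem_range] at hi hj
          have hie' : ({i+1, n} : Finset ℕ) = p.1 := hie
          have hje' : ({j+1, n} : Finset ℕ) = p.2 := hje
          have hij : i + 1 ≠ j + 1 := fun h => h3 (by rw [← hie', ← hje', h])
          rw [← hie', ← hje', pair_inter hij (by omega) (by omega)]
          exact Finset.card_singleton n
        rcases Lo with _ | ⟨e, Lo2⟩
        · -- Lo = [] : new leftover is e0
          rw [List.append_nil] at hnd hmem hcov H1 H2 H3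
          have hperm : (flatP ((pairUp rest).1 ++ PL) ++ [e0]).Perm (col' ++ flatP PL) := by
            rw [flatP_append, hflat, List.append_assoc, hcol'def]
            exact perm_helper1 e0 rest (flatP PL)
          refine ⟨(pairUp rest).1 ++ PL, [e0], hperm.symm.nodup H1, ?_, ?_, ?_, ?_, by simp⟩
          · intro x hx
            exact H2 x (hperm.subset hx)
          · intro x hc hsub
            exact (hperm.mem_iff).2 (H3 x hc hsub)
          · intro p hp
            rcases List.mem_append.1 hp with hp | hp
            · exact hpairs_cp p hp
            · exact hint p hp
          · intro x hx
            rw [List.mem_singleton] at hx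
            rw [hx, he0def]
            exact Finset.mem_insert_self 0 {n}
        · -- Lo = [e]
          have hLo2 : Lo2 = [] := by
            rcases Lo2 with _ | ⟨f, L3⟩
            · rfl
            · simp at hlen
          subst hLo2
          have heold : e ∈ flatP PL ++ [e] := List.mem_append.2 (Or.inr (List.mem_singleton_self e))
          have hecard : e.card = 2 := (hmem e heold).1
          have hesub : e ⊆ Finset.range n := (hmem e heold).2
          have h0e : 0 ∈ e := h0 e (List.mem_singleton_self e)
          have hinter : (e0 ∩ e).card = 1 := by
            have hkey : e0 ∩ e = {0} := by
              ext x
              simp only [he0def, Finset.mem_inter, Finset.mem_insert, Finset.mem_singleton]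
              constructor
              · rintro ⟨rfl | rfl, hxe⟩
                · rfl
                · have := hesub hxe
                  rw [Finset.mem_range] at this
                  omega
              · rintro rfl
                exact ⟨Or.inl rfl, h0e⟩
            rw [hkey]
            exact Finset.card_singleton 0
          have hperm : (flatP ((e0, e) :: ((pairUp rest).1 ++ PL)) ++ []).Perm
              (col' ++ (flatP PL ++ [e])) := by
            rw [flatP_cons, flatP_append, hflat, List.append_nil, hcol'def]
            exact perm_helper2 e0 e rest (flatP PL)
          refine ⟨(e0, e) :: ((pairUp rest).1 ++ PL), [], hperm.symm.nodup H1, ?_, ?_, ?_, by simp, by simp⟩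
          · intro x hx
            exact H2 x (hperm.subset hx)
          · intro x hc hsub
            exact hperm.mem_iff.2 (H3 x hc hsub)
          · intro p hp
            rcases List.mem_cons.1 hp with rfl | hp
            · exact hinter
            · rcases List.mem_append.1 hp with hp | hp
              · exact hpairs_cp p hp
              · exact hint p hp


lemma engine_main {V : Type*} [Fintype V] [DecidableEq V] (G : SimpleGraph V) (r : V)
    (L : List (V × Option V))
    (hnd : (bvJS L).Nodup) (hr : r ∉ bvJS L)
    (hcov : ∀ w : V, w ≠ r → w ∈ bvJS L)
    (h1 : ∀ u, (u, (none : Option V)) ∈ L → G.dist u r = 1)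
    (h2 : ∀ u v, (u, some v) ∈ L → G.dist v u = 1 ∧ G.dist u r = 2) :
    IsStackableAt G r := by
  have key := engineJS G r L 1 le_rfl hnd hr h1 h2
  have hstart : confJS r (bvJS L) 1 = (fun _ => 1) := by
    funext w
    by_cases hw : w = r
    · simp [confJS, hw]
    · simp [confJS, hw, hcov w hw]
  rw [hstart] at key
  have hlen : 1 + (bvJS L).length = Fintype.card V := by
    have h1' : (bvJS L).length = (bvJS L).toFinset.card := (List.toFinset_card_of_nodup hnd).symm
    have h2' : (bvJS L).toFinset = Finset.univ.erase r := by
      ext x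
      simp only [List.mem_toFinset, Finset.mem_erase, Finset.mem_univ, and_true]
      exact ⟨fun hx hxr => hr (hxr ▸ hx), fun hx => hcov x hx⟩
    have h3' : 1 ≤ Fintype.card V := Fintype.card_pos_iff.2 ⟨r⟩
    rw [h1', h2', Finset.card_erase_of_mem (Finset.mem_univ r), ← Finset.card_univ]
    rw [← Finset.card_univ] at h3'
    omega
  unfold IsStackableAt IsStackableConf
  have hend : (fun w => if w = r then ∑ v : V, (fun _ => (1:ℕ)) v else 0) =
      confJS r ([] : List V) (1 + (bvJS L).length) := by
    funext w
    simp [confJS, hlen]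
  rw [hend]
  exact key

lemma bvJS_pairs {V : Type*} (ι : Finset ℕ → V) :
    ∀ PL : List (Finset ℕ × Finset ℕ),
      bvJS (PL.map (fun p => (ι p.1, some (ι p.2)))) = (flatP PL).map ι
  | [] => rfl
  | p :: PL => by
      have ih := bvJS_pairs ι PL
      simp only [List.map_cons, bvJS, List.flatMap_cons, flatP_cons, Option.toList_some,
        List.cons_append, List.nil_append] at ih ⊢
      rw [ih]

lemma bvJS_singles {V : Type*} :
    ∀ l : List V, bvJS (l.map (fun w => (w, (none : Option V)))) = l
  | [] => rfl
  | a :: l => by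
      have ih := bvJS_singles l
      simp only [List.map_cons, bvJS, List.flatMap_cons, Option.toList_none,
        List.cons_append, List.nil_append] at ih ⊢
      rw [ih]

lemma mem_flatP_fst {α : Type*} {p : α × α} {PL : List (α × α)} (hp : p ∈ PL) :
    p.1 ∈ flatP PL := by
  simp only [flatP, List.mem_flatMap]
  exact ⟨p, hp, by simp⟩

lemma mem_flatP_snd {α : Type*} {p : α × α} {PL : List (α × α)} (hp : p ∈ PL) :
    p.2 ∈ flatP PL := by
  simp only [flatP, List.mem_flatMap]
  exact ⟨p, hp, by simp⟩

lemma assemble {V : Type*} [Fintype V] [DecidableEq V] (G : SimpleGraph V) (r : V) (n : ℕ)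
    (ι : Finset ℕ → V)
    (hι2 : ∀ e : Finset ℕ, e.card = 2 → e ⊆ Finset.range n → G.dist (ι e) r = 2)
    (hinj : ∀ e e' : Finset ℕ, e.card = 2 → e ⊆ Finset.range n → e'.card = 2 →
      e' ⊆ Finset.range n → ι e = ι e' → e = e')
    (hadj : ∀ e e' : Finset ℕ, e.card = 2 → e ⊆ Finset.range n → e'.card = 2 →
      e' ⊆ Finset.range n → (e ∩ e').card = 1 → G.dist (ι e) (ι e') = 1)
    (hsurj : ∀ A : V, G.dist A r = 2 → ∃ e, e.card = 2 ∧ e ⊆ Finset.range n ∧ ι e = A)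
    (hall : ∀ A : V, A ≠ r → G.dist A r = 1 ∨ G.dist A r = 2)
    (hpartner : ∀ A : V, G.dist A r = 2 → ∃ w, G.dist w A = 1 ∧ G.dist w r = 1) :
    IsStackableAt G r := by
  classical
  obtain ⟨PL, Lo, hnd, hmem, hcov, hint, h0, hlen⟩ := pairing n
  have hmemP : ∀ e ∈ flatP PL, e.card = 2 ∧ e ⊆ Finset.range n :=
    fun e he => hmem e (List.mem_append.2 (Or.inl he))
  have hndP : (flatP PL).Nodup := (List.nodup_append.1 hnd).1
  have hmapnd : ((flatP PL).map ι).Nodup := by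
    refine List.Nodup.map_on ?_ hndP
    intro x hx y hy hxy
    exact hinj x y (hmemP x hx).1 (hmemP x hx).2 (hmemP y hy).1 (hmemP y hy).2 hxy
  have hmap2 : ∀ x ∈ (flatP PL).map ι, G.dist x r = 2 := by
    intro x hx
    obtain ⟨e, he, rfl⟩ := List.mem_map.1 hx
    exact hι2 e (hmemP e he).1 (hmemP e he).2
  have hrdist : G.dist r r = 0 := SimpleGraph.dist_self
  set S1 : Finset V := Finset.univ.filter (fun w => G.dist w r = 1) with hS1def
  have hS1 : ∀ w, w ∈ S1 ↔ G.dist w r = 1 := by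
    intro w; simp [hS1def]
  -- the pair blocks
  set Lpairs : List (V × Option V) := PL.map (fun p => (ι p.1, some (ι p.2))) with hLpairsdef
  have hLpairs_h2 : ∀ u v, (u, some v) ∈ Lpairs → G.dist v u = 1 ∧ G.dist u r = 2 := by
    intro u v huv
    obtain ⟨p, hp, heq⟩ := List.mem_map.1 huv
    have hu : u = ι p.1 := by cases heq; rfl
    have hv : v = ι p.2 := by
      have := congrArg Prod.snd heq
      simp at this
      exact this.symm
    obtain ⟨hc1, hs1⟩ := hmemP p.1 (mem_flatP_fst hp)
    obtain ⟨hc2, hs2⟩ := hmemP p.2 (mem_flatP_snd hp)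
    subst hu hv
    refine ⟨hadj p.2 p.1 hc2 hs2 hc1 hs1 ?_, hι2 p.1 hc1 hs1⟩
    rw [Finset.inter_comm]
    exact hint p hp
  have hLpairs_none : ∀ u, (u, (none : Option V)) ∈ Lpairs → False := by
    intro u hu
    obtain ⟨p, hp, heq⟩ := List.mem_map.1 hu
    have := congrArg Prod.snd heq
    simp at this
  rcases Lo with _ | ⟨e, Lo2⟩
  · -- no leftover
    rw [List.append_nil] at hnd hmem hcov
    set L : List (V × Option V) := Lpairs ++ S1.toList.map (fun w => (w, none)) with hLdef
    have hbv : bvJS L = (flatP PL).map ι ++ S1.toList := by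
      rw [hLdef, bvJS, List.flatMap_append, ← bvJS, ← bvJS, bvJS_pairs, bvJS_singles]
    apply engine_main G r L
    · rw [hbv, List.nodup_append]
      refine ⟨hmapnd, S1.nodup_toList, ?_⟩
      intro x hx1 y hx2 hxy
      subst hxy
      have := hmap2 x hx1
      rw [Finset.mem_toList, hS1] at hx2
      omega
    · rw [hbv]
      intro hrm
      rcases List.mem_append.1 hrm with h | h
      · have := hmap2 r h; omega
      · rw [Finset.mem_toList, hS1] at h; omega
    · intro w hw
      rw [hbv]
      rcases hall w hw with h | h
      · exact List.mem_append.2 (Or.inr (by rw [Finset.mem_toList, hS1]; exact h))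
      · obtain ⟨e', hc, hs, rfl⟩ := hsurj w h
        exact List.mem_append.2 (Or.inl (List.mem_map.2 ⟨e', hcov e' hc hs, rfl⟩))
    · intro u hu
      rcases List.mem_append.1 hu with h | h
      · exact absurd h (by intro hh; exact hLpairs_none u hh)
      · obtain ⟨x, hx, heq⟩ := List.mem_map.1 h
        have hux : u = x := by cases heq; rfl
        subst hux
        rw [Finset.mem_toList, hS1] at hx
        exact hx
    · intro u v huv
      rcases List.mem_append.1 huv with h | h
      · exact hLpairs_h2 u v h
      · obtain ⟨x, hx, heq⟩ := List.mem_map.1 h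
        have := congrArg Prod.snd heq
        simp at this
  · -- leftover [e]
    have hLo2 : Lo2 = [] := by
      rcases Lo2 with _ | ⟨f, L3⟩
      · rfl
      · simp at hlen
    subst hLo2
    have heM : e ∈ flatP PL ++ [e] := List.mem_append.2 (Or.inr (List.mem_singleton_self e))
    obtain ⟨hecard, hesub⟩ := hmem e heM
    have heP : e ∉ flatP PL := by
      intro hmem'
      exact (List.nodup_append.1 hnd).2.2 e hmem' e (List.mem_singleton_self e) rfl
    have hιe2 : G.dist (ι e) r = 2 := hι2 e hecard hesub
    obtain ⟨w, hw1, hwr⟩ := hpartner (ι e) hιe2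
    set L : List (V × Option V) :=
      (ι e, some w) :: (Lpairs ++ (S1.erase w).toList.map (fun x => (x, none))) with hLdef
    have hbv : bvJS L = ι e :: w :: ((flatP PL).map ι ++ (S1.erase w).toList) := by
      rw [hLdef, bvJS, List.flatMap_cons, List.flatMap_append, ← bvJS, ← bvJS,
        bvJS_pairs, bvJS_singles]
      rfl
    have hιe_map : ι e ∉ (flatP PL).map ι := by
      intro hmem'
      obtain ⟨e', he', heq⟩ := List.mem_map.1 hmem'
      obtain ⟨hc', hs'⟩ := hmemP e' he'
      exact heP ((hinj e' e hc' hs' hecard hesub heq) ▸ he')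
    have hwS1 : w ∈ S1 := (hS1 w).2 hwr
    have hιew : ι e ≠ w := by
      intro h
      rw [h] at hιe2
      omega
    apply engine_main G r L
    · rw [hbv]
      rw [List.nodup_cons, List.nodup_cons]
      refine ⟨?_, ?_, ?_⟩
      · intro h
        rcases List.mem_cons.1 h with h | h
        · exact hιew h
        · rcases List.mem_append.1 h with h | h
          · exact hιe_map h
          · rw [Finset.mem_toList] at h
            have := (hS1 (ι e)).1 (Finset.mem_of_mem_erase h)
            omega
      · intro h
        rcases List.mem_append.1 h with h | h
        · have := hmap2 w h
          omega
        · rw [Finset.mem_toList] at h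
          exact (Finset.notMem_erase w S1) h
      · rw [List.nodup_append]
        refine ⟨hmapnd, Finset.nodup_toList _, ?_⟩
        intro x hx1 y hx2 hxy
        subst hxy
        have := hmap2 x hx1
        rw [Finset.mem_toList] at hx2
        have := (hS1 x).1 (Finset.mem_of_mem_erase hx2)
        omega
    · rw [hbv]
      intro hrm
      rcases List.mem_cons.1 hrm with h | h
      · rw [← h] at hιe2
        omega
      · rcases List.mem_cons.1 h with h | h
        · rw [← h] at hwr
          omega
        · rcases List.mem_append.1 h with h | h
          · have := hmap2 r h; omega
          · rw [Finset.mem_toList] at h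
            have := (hS1 r).1 (Finset.mem_of_mem_erase h)
            omega
    · intro x hx
      rw [hbv]
      rcases hall x hx with h | h
      · by_cases hxw : x = w
        · exact hxw ▸ List.mem_cons_of_mem _ (List.mem_cons_self)
        · refine List.mem_cons_of_mem _ (List.mem_cons_of_mem _ (List.mem_append.2 (Or.inr ?_)))
          rw [Finset.mem_toList]
          exact Finset.mem_erase.2 ⟨hxw, (hS1 x).2 h⟩
      · obtain ⟨e', hc, hs, rfl⟩ := hsurj x h
        rcases List.mem_append.1 (hcov e' hc hs) with h' | h'
        · exact List.mem_cons_of_mem _ (List.mem_cons_of_mem _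
            (List.mem_append.2 (Or.inl (List.mem_map.2 ⟨e', h', rfl⟩))))
        · rw [List.mem_singleton] at h'
          rw [h']
          exact List.mem_cons_self
    · intro u hu
      rcases List.mem_cons.1 hu with h | h
      · simp at h
      · rcases List.mem_append.1 h with h | h
        · exact absurd h (by intro hh; exact hLpairs_none u hh)
        · obtain ⟨x, hx, heq⟩ := List.mem_map.1 h
          have hux : u = x := by cases heq; rfl
          subst hux
          rw [Finset.mem_toList] at hx
          exact (hS1 u).1 (Finset.mem_of_mem_erase hx)
    · intro u v huv
      rcases List.mem_cons.1 huv with h | h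
      · have hu : u = ι e := by cases h; rfl
        have hv : v = w := by cases h; rfl
        subst hu hv
        exact ⟨hw1, hιe2⟩
      · rcases List.mem_append.1 h with h | h
        · exact hLpairs_h2 u v h
        · obtain ⟨x, hx, heq⟩ := List.mem_map.1 h
          have := congrArg Prod.snd heq
          simp at this


lemma hall_aux (hk : 1 ≤ k) (hge : ∀ A B : {A : Finset (Fin m) // A.card = k},
      k ≤ (A.1 ∩ B.1).card + 2)
    (r A : {A : Finset (Fin m) // A.card = k}) (hAr : A ≠ r) :
    (johnsonGraph m k).dist A r = 1 ∨ (johnsonGraph m k).dist A r = 2 := by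
  have hf := dist_formula hk A r
  have hle := inter_le_k A r
  have hne : (A.1 ∩ r.1).card ≠ k := fun h => hAr (eq_of_inter A r h)
  have := hge A r
  rw [hf]
  omega

lemma hpartner_aux (hk2 : 2 ≤ k) (r A : {A : Finset (Fin m) // A.card = k})
    (h : (A.1 ∩ r.1).card = k - 2) :
    ∃ w, (johnsonGraph m k).dist w A = 1 ∧ (johnsonGraph m k).dist w r = 1 := by
  have hk1 : 1 ≤ k := by omega
  have hsdA : (A.1 \ r.1).card = 2 := by
    have := Finset.card_inter_add_card_sdiff A.1 r.1
    rw [h, A.2] at this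
    omega
  have hsdr : (r.1 \ A.1).card = 2 := by
    have h' : (r.1 ∩ A.1).card = k - 2 := by rwa [Finset.inter_comm]
    have := Finset.card_inter_add_card_sdiff r.1 A.1
    rw [h', r.2] at this
    omega
  obtain ⟨x, hx⟩ := Finset.card_pos.1 (by omega : 0 < (A.1 \ r.1).card)
  obtain ⟨a, ha⟩ := Finset.card_pos.1 (by omega : 0 < (r.1 \ A.1).card)
  rw [Finset.mem_sdiff] at hx ha
  have haA : a ∉ A.1 := ha.2
  have hxA : x ∈ A.1 := hx.1
  have haB : a ∉ A.1.erase x := fun hm => haA (Finset.mem_of_mem_erase hm)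
  have hBcard : (insert a (A.1.erase x)).card = k := by
    rw [Finset.card_insert_of_notMem haB, Finset.card_erase_of_mem hxA, A.2]
    omega
  set w : {A : Finset (Fin m) // A.card = k} := ⟨insert a (A.1.erase x), hBcard⟩ with hwdef
  have hwA : w.1 ∩ A.1 = A.1.erase x := by
    ext z
    simp only [hwdef, Finset.mem_inter, Finset.mem_insert, Finset.mem_erase]
    constructor
    · rintro ⟨rfl | ⟨hzx, hzA⟩, hzA'⟩
      · exact absurd hzA' haA
      · exact ⟨hzx, hzA⟩
    · rintro ⟨hzx, hzA⟩
      exact ⟨Or.inr ⟨hzx, hzA⟩, hzA⟩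
  have hwAcard : (w.1 ∩ A.1).card = k - 1 := by
    rw [hwA, Finset.card_erase_of_mem hxA, A.2]
  have hwr : w.1 ∩ r.1 = insert a (A.1 ∩ r.1) := by
    ext z
    simp only [hwdef, Finset.mem_inter, Finset.mem_insert, Finset.mem_erase]
    constructor
    · rintro ⟨rfl | ⟨hzx, hzA⟩, hzr⟩
      · exact Or.inl rfl
      · exact Or.inr ⟨hzA, hzr⟩
    · rintro (rfl | ⟨hzA, hzr⟩)
      · exact ⟨Or.inl rfl, ha.1⟩
      · refine ⟨Or.inr ⟨fun hzx => ?_, hzA⟩, hzr⟩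
        subst hzx
        exact hx.2 hzr
  have hwrcard : (w.1 ∩ r.1).card = k - 1 := by
    rw [hwr, Finset.card_insert_of_notMem (fun hm => haA (Finset.mem_inter.1 hm).1), h]
    omega
  refine ⟨w, ?_, ?_⟩
  · rw [dist_formula hk1, hwAcard]; omega
  · rw [dist_formula hk1, hwrcard]; omega

lemma stackable_k2 (hm : 4 ≤ m) (r : {A : Finset (Fin m) // A.card = 2}) :
    IsStackableAt (johnsonGraph m 2) r := by
  classical
  have hk1 : (1:ℕ) ≤ 2 := by norm_num
  have hge : ∀ A B : {A : Finset (Fin m) // A.card = 2}, 2 ≤ (A.1 ∩ B.1).card + 2 :=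
    fun A B => Nat.le_add_left 2 _
  have hcard : Fintype.card {x : Fin m // x ∈ (r.1ᶜ : Finset (Fin m))} = m - 2 := by
    rw [Fintype.card_coe, Finset.card_compl, Fintype.card_fin, r.2]
  let g : Fin (m-2) ≃ {x : Fin m // x ∈ (r.1ᶜ : Finset (Fin m))} :=
    (Fintype.equivFinOfCardEq hcard).symm
  let f : ℕ → Fin m := fun i => if h : i < m - 2 then (g ⟨i, h⟩ : Fin m) else ⟨0, by omega⟩
  have hf_mem : ∀ i, i < m - 2 → f i ∈ (r.1ᶜ : Finset (Fin m)) := by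
    intro i hi
    simp only [f, dif_pos hi]
    exact (g ⟨i, hi⟩).2
  have hf_inj : ∀ i, i < m-2 → ∀ j, j < m-2 → f i = f j → i = j := by
    intro i hi j hj hij
    simp only [f, dif_pos hi, dif_pos hj] at hij
    have := g.injective (Subtype.coe_injective hij)
    exact congrArg Fin.val this
  have hinjOn : ∀ e : Finset ℕ, e ⊆ Finset.range (m-2) → Set.InjOn f ↑e := by
    intro e hsub x hx y hy hxy
    have hx' := Finset.mem_range.1 (hsub hx)
    have hy' := Finset.mem_range.1 (hsub hy)
    exact hf_inj x hx' y hy' hxy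
  have himgcard : ∀ e : Finset ℕ, e.card = 2 → e ⊆ Finset.range (m-2) →
      (e.image f).card = 2 := by
    intro e hc hsub
    rw [Finset.card_image_of_injOn (hinjOn e hsub), hc]
  set ι : Finset ℕ → {A : Finset (Fin m) // A.card = 2} := fun e =>
    if h : (e.image f).card = 2 then ⟨e.image f, h⟩ else r with hιdef
  have hval : ∀ e : Finset ℕ, e.card = 2 → e ⊆ Finset.range (m-2) →
      (ι e).1 = e.image f := by
    intro e hc hsub
    simp only [hιdef, dif_pos (himgcard e hc hsub)]
  have hintr : ∀ e : Finset ℕ, e.card = 2 → e ⊆ Finset.range (m-2) →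
      ((ι e).1 ∩ r.1).card = 0 := by
    intro e hc hsub
    rw [hval e hc hsub, Finset.card_eq_zero]
    ext z
    simp only [Finset.mem_inter, Finset.mem_image, Finset.notMem_empty, iff_false, not_and]
    rintro ⟨i, hi, rfl⟩ hzr
    have := hf_mem i (Finset.mem_range.1 (hsub hi))
    rw [Finset.mem_compl] at this
    exact this hzr
  have himage_inj : ∀ e e' : Finset ℕ, e ⊆ Finset.range (m-2) → e' ⊆ Finset.range (m-2) →
      e.image f = e'.image f → e = e' := by
    intro e e' hs hs' heq
    ext a
    constructor
    · intro ha
      have : f a ∈ e'.image f := heq ▸ Finset.mem_image_of_mem f ha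
      obtain ⟨b, hb, hba⟩ := Finset.mem_image.1 this
      have := hf_inj b (Finset.mem_range.1 (hs' hb)) a (Finset.mem_range.1 (hs ha)) hba
      exact this ▸ hb
    · intro ha
      have : f a ∈ e.image f := heq ▸ Finset.mem_image_of_mem f ha
      obtain ⟨b, hb, hba⟩ := Finset.mem_image.1 this
      have := hf_inj b (Finset.mem_range.1 (hs hb)) a (Finset.mem_range.1 (hs' ha)) hba
      exact this ▸ hb
  refine assemble (johnsonGraph m 2) r (m-2) ι ?_ ?_ ?_ ?_ ?_ ?_
  · intro e hc hsub
    rw [dist_formula hk1, hintr e hc hsub]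
  · intro e e' hc hs hc' hs' heq
    apply himage_inj e e' hs hs'
    rw [← hval e hc hs, ← hval e' hc' hs', heq]
  · intro e e' hc hs hc' hs' hint
    rw [dist_formula hk1, hval e hc hs, hval e' hc' hs']
    have hinter : (e.image f) ∩ (e'.image f) = (e ∩ e').image f := by
      rw [Finset.image_inter_of_injOn _ _ ?_]
      intro x hx y hy hxy
      rcases Set.mem_union .. |>.1 hx with hx' | hx'
      all_goals rcases Set.mem_union .. |>.1 hy with hy' | hy'
      all_goals {
        refine hf_inj x (Finset.mem_range.1 ?_) y (Finset.mem_range.1 ?_) hxy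
        · first | exact hs (by exact_mod_cast hx') | exact hs' (by exact_mod_cast hx')
        · first | exact hs (by exact_mod_cast hy') | exact hs' (by exact_mod_cast hy') }
    rw [hinter, Finset.card_image_of_injOn (hinjOn _ (fun x hx =>
      hs (Finset.mem_of_mem_inter_left hx))), hint]
  · intro A hA
    rw [dist_formula hk1] at hA
    have hle := inter_le_k A r
    have hc0 : (A.1 ∩ r.1).card = 0 := by omega
    have hsubc : ∀ x ∈ A.1, x ∈ (r.1ᶜ : Finset (Fin m)) := by
      intro x hxA
      rw [Finset.mem_compl]
      intro hxr
      have : x ∈ A.1 ∩ r.1 := Finset.mem_inter.2 ⟨hxA, hxr⟩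
      rw [Finset.card_eq_zero.1 hc0] at this
      exact absurd this (Finset.notMem_empty x)
    set finv : Fin m → ℕ := fun x =>
      if h : x ∈ (r.1ᶜ : Finset (Fin m)) then ((g.symm ⟨x, h⟩ : Fin (m-2)) : ℕ) else 0
      with hfinvdef
    have hfinv : ∀ x, x ∈ (r.1ᶜ : Finset (Fin m)) → f (finv x) = x := by
      intro x hx
      have hlt : finv x < m - 2 := by
        simp only [hfinvdef, dif_pos hx]
        exact (g.symm ⟨x, hx⟩).isLt
      simp only [hfinvdef, dif_pos hx] at hlt ⊢
      simp only [f, dif_pos hlt]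
      have : (⟨((g.symm ⟨x, hx⟩ : Fin (m-2)) : ℕ), hlt⟩ : Fin (m-2)) = g.symm ⟨x, hx⟩ := rfl
      rw [this, Equiv.apply_symm_apply]
    set e : Finset ℕ := A.1.image finv with hedef
    have hecard : e.card = 2 := by
      rw [hedef, Finset.card_image_of_injOn, A.2]
      intro x hx y hy hxy
      have hx' := hsubc x (by exact_mod_cast hx)
      have hy' := hsubc y (by exact_mod_cast hy)
      have : f (finv x) = f (finv y) := by rw [hxy]
      rw [hfinv x hx', hfinv y hy'] at this
      exact this
    have hesub : e ⊆ Finset.range (m-2) := by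
      intro i hi
      obtain ⟨x, hx, rfl⟩ := Finset.mem_image.1 hi
      have hx' := hsubc x hx
      rw [Finset.mem_range]
      simp only [hfinvdef, dif_pos hx']
      exact (g.symm ⟨x, hx'⟩).isLt
    have himg : e.image f = A.1 := by
      rw [hedef, Finset.image_image]
      rw [show A.1.image (f ∘ finv) = A.1.image id from
        Finset.image_congr (fun x hx => hfinv x (hsubc x hx))]
      exact Finset.image_id
    refine ⟨e, hecard, hesub, ?_⟩
    have : (e.image f).card = 2 := by rw [himg, A.2]
    simp only [hιdef, dif_pos this]
    exact Subtype.ext himg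
  · exact fun A hA => hall_aux hk1 hge r A hA
  · intro A hA
    rw [dist_formula hk1] at hA
    have hle := inter_le_k A r
    exact hpartner_aux (le_refl 2) r A (by omega)

lemma stackable_mk2 (hk2 : 2 ≤ k) (r : {A : Finset (Fin (k+2)) // A.card = k}) :
    IsStackableAt (johnsonGraph (k+2) k) r := by
  classical
  have hk1 : 1 ≤ k := by omega
  have hge : ∀ A B : {A : Finset (Fin (k+2)) // A.card = k}, k ≤ (A.1 ∩ B.1).card + 2 := by
    intro A B
    have h1 := Finset.card_union_add_card_inter A.1 B.1
    have h2 : (A.1 ∪ B.1).card ≤ k + 2 := by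
      calc (A.1 ∪ B.1).card ≤ Finset.univ.card := Finset.card_le_univ _
      _ = k + 2 := by rw [Finset.card_univ, Fintype.card_fin]
    rw [A.2, B.2] at h1
    omega
  have hcard : Fintype.card {x : Fin (k+2) // x ∈ r.1} = k := by
    rw [Fintype.card_coe, r.2]
  let g : Fin k ≃ {x : Fin (k+2) // x ∈ r.1} := (Fintype.equivFinOfCardEq hcard).symm
  let f : ℕ → Fin (k+2) := fun i => if h : i < k then (g ⟨i, h⟩ : Fin (k+2)) else ⟨0, by omega⟩
  have hf_mem : ∀ i, i < k → f i ∈ r.1 := by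
    intro i hi
    simp only [f, dif_pos hi]
    exact (g ⟨i, hi⟩).2
  have hf_inj : ∀ i, i < k → ∀ j, j < k → f i = f j → i = j := by
    intro i hi j hj hij
    simp only [f, dif_pos hi, dif_pos hj] at hij
    exact congrArg Fin.val (g.injective (Subtype.coe_injective hij))
  have hinjOn : ∀ e : Finset ℕ, e ⊆ Finset.range k → Set.InjOn f ↑e := by
    intro e hsub x hx y hy hxy
    exact hf_inj x (Finset.mem_range.1 (hsub hx)) y (Finset.mem_range.1 (hsub hy)) hxy
  have himgcard : ∀ e : Finset ℕ, e.card = 2 → e ⊆ Finset.range k →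
      (e.image f).card = 2 := by
    intro e hc hsub
    rw [Finset.card_image_of_injOn (hinjOn e hsub), hc]
  have himgsub : ∀ e : Finset ℕ, e ⊆ Finset.range k → e.image f ⊆ r.1 := by
    intro e hsub x hx
    obtain ⟨i, hi, rfl⟩ := Finset.mem_image.1 hx
    exact hf_mem i (Finset.mem_range.1 (hsub hi))
  have hcompl2 : ((r.1)ᶜ : Finset (Fin (k+2))).card = 2 := by
    rw [Finset.card_compl, Fintype.card_fin, r.2]
    omega
  have hdisj : ∀ s : Finset (Fin (k+2)), s ⊆ r.1 → Disjoint s ((r.1)ᶜ : Finset (Fin (k+2))) := by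
    intro s hs
    rw [Finset.disjoint_left]
    intro x hx hx'
    exact (Finset.mem_compl.1 hx') (hs hx)
  have hbodycard : ∀ e : Finset ℕ, e.card = 2 → e ⊆ Finset.range k →
      ((r.1 \ e.image f) ∪ (r.1)ᶜ).card = k := by
    intro e hc hsub
    rw [Finset.card_union_of_disjoint (hdisj _ (Finset.sdiff_subset)),
      Finset.card_sdiff_of_subset (himgsub e hsub), himgcard e hc hsub, hcompl2, r.2]
    omega
  set ι : Finset ℕ → {A : Finset (Fin (k+2)) // A.card = k} := fun e =>
    if h : ((r.1 \ e.image f) ∪ (r.1)ᶜ).card = k then ⟨(r.1 \ e.image f) ∪ (r.1)ᶜ, h⟩ else r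
    with hιdef
  have hval : ∀ e : Finset ℕ, e.card = 2 → e ⊆ Finset.range k →
      (ι e).1 = (r.1 \ e.image f) ∪ (r.1)ᶜ := by
    intro e hc hsub
    simp only [hιdef, dif_pos (hbodycard e hc hsub)]
  have hbodyr : ∀ e : Finset ℕ, ((r.1 \ e.image f) ∪ (r.1)ᶜ) ∩ r.1 = r.1 \ e.image f := by
    intro e
    ext z
    simp only [Finset.mem_inter, Finset.mem_union, Finset.mem_sdiff, Finset.mem_compl]
    tauto
  have himage_inj : ∀ e e' : Finset ℕ, e ⊆ Finset.range k → e' ⊆ Finset.range k →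
      e.image f = e'.image f → e = e' := by
    intro e e' hs hs' heq
    ext a
    constructor
    · intro ha
      have : f a ∈ e'.image f := heq ▸ Finset.mem_image_of_mem f ha
      obtain ⟨b, hb, hba⟩ := Finset.mem_image.1 this
      have := hf_inj b (Finset.mem_range.1 (hs' hb)) a (Finset.mem_range.1 (hs ha)) hba
      exact this ▸ hb
    · intro ha
      have : f a ∈ e.image f := heq ▸ Finset.mem_image_of_mem f ha
      obtain ⟨b, hb, hba⟩ := Finset.mem_image.1 this
      have := hf_inj b (Finset.mem_range.1 (hs hb)) a (Finset.mem_range.1 (hs' ha)) hba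
      exact this ▸ hb
  refine assemble (johnsonGraph (k+2) k) r k ι ?_ ?_ ?_ ?_ ?_ ?_
  · intro e hc hsub
    rw [dist_formula hk1, hval e hc hsub, hbodyr e, Finset.card_sdiff_of_subset (himgsub e hsub),
      himgcard e hc hsub, r.2]
    omega
  · intro e e' hc hs hc' hs' heq
    have hbeq : (r.1 \ e.image f) ∪ (r.1)ᶜ = (r.1 \ e'.image f) ∪ (r.1)ᶜ := by
      rw [← hval e hc hs, ← hval e' hc' hs', heq]
    have hseq : r.1 \ e.image f = r.1 \ e'.image f := by
      rw [← hbodyr e, ← hbodyr e', hbeq]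
    have himg_eq : e.image f = e'.image f := by
      have h1 := Finset.sdiff_sdiff_eq_self (himgsub e hs)
      have h2 := Finset.sdiff_sdiff_eq_self (himgsub e' hs')
      rw [← h1, ← h2, hseq]
    exact himage_inj e e' hs hs' himg_eq
  · intro e e' hc hs hc' hs' hint
    have hinter : (e.image f) ∩ (e'.image f) = (e ∩ e').image f := by
      rw [Finset.image_inter_of_injOn _ _ ?_]
      intro x hx y hy hxy
      rcases Set.mem_union .. |>.1 hx with hx' | hx'
      all_goals rcases Set.mem_union .. |>.1 hy with hy' | hy'
      all_goals {
        refine hf_inj x (Finset.mem_range.1 ?_) y (Finset.mem_range.1 ?_) hxy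
        · first | exact hs (by exact_mod_cast hx') | exact hs' (by exact_mod_cast hx')
        · first | exact hs (by exact_mod_cast hy') | exact hs' (by exact_mod_cast hy') }
    have hintercard : ((e.image f) ∩ (e'.image f)).card = 1 := by
      rw [hinter, Finset.card_image_of_injOn (hinjOn _ (fun x hx =>
        hs (Finset.mem_of_mem_inter_left hx))), hint]
    have huesub : (e.image f) ∪ (e'.image f) ⊆ r.1 :=
      Finset.union_subset (himgsub e hs) (himgsub e' hs')
    have huecard : ((e.image f) ∪ (e'.image f)).card = 3 := by
      have := Finset.card_union_add_card_inter (e.image f) (e'.image f)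
      rw [himgcard e hc hs, himgcard e' hc' hs', hintercard] at this
      omega
    have h3k : 3 ≤ k := by
      have h := Finset.card_le_card huesub
      rw [huecard, r.2] at h
      exact h
    have hbodyint : ((r.1 \ e.image f) ∪ (r.1)ᶜ) ∩ ((r.1 \ e'.image f) ∪ (r.1)ᶜ) =
        (r.1 \ ((e.image f) ∪ (e'.image f))) ∪ (r.1)ᶜ := by
      ext z
      simp only [Finset.mem_inter, Finset.mem_union, Finset.mem_sdiff, Finset.mem_compl]
      tauto
    rw [dist_formula hk1, hval e hc hs, hval e' hc' hs', hbodyint,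
      Finset.card_union_of_disjoint (hdisj _ (Finset.sdiff_subset)),
      Finset.card_sdiff_of_subset huesub, huecard, hcompl2, r.2]
    omega
  · intro A hA
    rw [dist_formula hk1] at hA
    have hle := inter_le_k A r
    have hc0 : (A.1 ∩ r.1).card = k - 2 := by omega
    have hsr : (r.1 \ A.1).card = 2 := by
      have h' : (r.1 ∩ A.1).card = k - 2 := by rw [Finset.inter_comm]; exact hc0
      have := Finset.card_inter_add_card_sdiff r.1 A.1
      rw [h', r.2] at this
      omega
    set s : Finset (Fin (k+2)) := r.1 \ A.1 with hsdef
    have hssub : s ⊆ r.1 := Finset.sdiff_subset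
    set finv : Fin (k+2) → ℕ := fun x =>
      if h : x ∈ r.1 then ((g.symm ⟨x, h⟩ : Fin k) : ℕ) else 0 with hfinvdef
    have hfinv : ∀ x, x ∈ r.1 → f (finv x) = x := by
      intro x hx
      have hlt : finv x < k := by
        simp only [hfinvdef, dif_pos hx]
        exact (g.symm ⟨x, hx⟩).isLt
      simp only [hfinvdef, dif_pos hx] at hlt ⊢
      simp only [f, dif_pos hlt]
      have : (⟨((g.symm ⟨x, hx⟩ : Fin k) : ℕ), hlt⟩ : Fin k) = g.symm ⟨x, hx⟩ := rfl
      rw [this, Equiv.apply_symm_apply]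
    set e : Finset ℕ := s.image finv with hedef
    have hecard : e.card = 2 := by
      rw [hedef, Finset.card_image_of_injOn, hsr]
      intro x hx y hy hxy
      have hx' := hssub (by exact_mod_cast hx)
      have hy' := hssub (by exact_mod_cast hy)
      have : f (finv x) = f (finv y) := by rw [hxy]
      rw [hfinv x hx', hfinv y hy'] at this
      exact this
    have hesub : e ⊆ Finset.range k := by
      intro i hi
      obtain ⟨x, hx, rfl⟩ := Finset.mem_image.1 hi
      have hx' := hssub hx
      rw [Finset.mem_range]
      simp only [hfinvdef, dif_pos hx']
      exact (g.symm ⟨x, hx'⟩).isLt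
    have himg : e.image f = s := by
      rw [hedef, Finset.image_image]
      rw [show s.image (f ∘ finv) = s.image id from
        Finset.image_congr (fun x hx => hfinv x (hssub hx))]
      exact Finset.image_id
    have hArcompl : A.1 \ r.1 = (r.1)ᶜ := by
      apply Finset.eq_of_subset_of_card_le
      · intro x hx
        rw [Finset.mem_compl]
        exact (Finset.mem_sdiff.1 hx).2
      · have h1 : (A.1 \ r.1).card = 2 := by
          have := Finset.card_inter_add_card_sdiff A.1 r.1
          rw [hc0, A.2] at this
          omega
        rw [h1, hcompl2]
    have hbody : (r.1 \ e.image f) ∪ (r.1)ᶜ = A.1 := by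
      rw [himg, hsdef, Finset.sdiff_sdiff_self_left, ← hArcompl]
      ext z
      simp only [Finset.mem_union, Finset.mem_inter, Finset.mem_sdiff]
      tauto
    refine ⟨e, hecard, hesub, ?_⟩
    have hbc : ((r.1 \ e.image f) ∪ (r.1)ᶜ).card = k := by rw [hbody, A.2]
    simp only [hιdef, dif_pos hbc]
    exact Subtype.ext hbody
  · exact fun A hA => hall_aux hk1 hge r A hA
  · intro A hA
    rw [dist_formula hk1] at hA
    have hle := inter_le_k A r
    exact hpartner_aux hk2 r A (by omega)


end JGaux

theorem johnson_diam_two_stackable (m k : ℕ) (hk : 1 ≤ k) (hkm : k < m)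
    (hdiam_le : ∀ A B : {A : Finset (Fin m) // A.card = k},
      (johnsonGraph m k).dist A B ≤ 2)
    (hdiam_eq : ∃ A B : {A : Finset (Fin m) // A.card = k},
      (johnsonGraph m k).dist A B = 2) :
    IsStackable (johnsonGraph m k) := by
  classical
  intro r
  obtain ⟨A0, B0, hd0⟩ := hdiam_eq
  rw [JGaux.dist_formula hk A0 B0] at hd0
  have hle0 := JGaux.inter_le_k A0 B0
  have hk2 : 2 ≤ k := by omega
  have hm4 : k + 2 ≤ m := by
    have h1 := Finset.card_union_add_card_inter A0.1 B0.1
    have h2 : (A0.1 ∪ B0.1).card ≤ m := by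
      calc (A0.1 ∪ B0.1).card ≤ Finset.univ.card := Finset.card_le_univ _
      _ = m := by rw [Finset.card_univ, Fintype.card_fin]
    rw [A0.2, B0.2] at h1
    omega
  have hcase : k = 2 ∨ m = k + 2 := by
    by_contra hcon
    push_neg at hcon
    have hk3 : 3 ≤ k := by omega
    have hm3 : k + 3 ≤ m := by omega
    have hfil : ∀ a b : ℕ, b ≤ m →
        (Finset.univ.filter (fun i : Fin m => a ≤ i.1 ∧ i.1 < b)).card = b - a := by
      intro a b hbm
      have himg : (Finset.univ.filter (fun i : Fin m => a ≤ i.1 ∧ i.1 < b)).image Fin.val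
          = Finset.Ico a b := by
        ext x
        simp only [Finset.mem_image, Finset.mem_filter, Finset.mem_univ, true_and,
          Finset.mem_Ico]
        constructor
        · rintro ⟨i, ⟨h1, h2⟩, rfl⟩
          exact ⟨h1, h2⟩
        · rintro ⟨h1, h2⟩
          exact ⟨⟨x, by omega⟩, ⟨h1, h2⟩, rfl⟩
      have hcc := Finset.card_image_of_injective
        (Finset.univ.filter (fun i : Fin m => a ≤ i.1 ∧ i.1 < b)) Fin.val_injective
      rw [himg, Nat.card_Ico] at hcc
      omega
    set A : {A : Finset (Fin m) // A.card = k} :=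
      ⟨Finset.univ.filter (fun i : Fin m => 0 ≤ i.1 ∧ i.1 < k), by
        have h := hfil 0 k (by omega); omega⟩ with hAdef
    set B : {A : Finset (Fin m) // A.card = k} :=
      ⟨Finset.univ.filter (fun i : Fin m => 3 ≤ i.1 ∧ i.1 < k + 3), by
        have h := hfil 3 (k+3) (by omega); omega⟩ with hBdef
    have hAB : A.1 ∩ B.1 = Finset.univ.filter (fun i : Fin m => 3 ≤ i.1 ∧ i.1 < k) := by
      ext i
      simp only [hAdef, hBdef, Finset.mem_inter, Finset.mem_filter, Finset.mem_univ, true_and]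
      omega
    have hABcard : (A.1 ∩ B.1).card = k - 3 := by
      rw [hAB, hfil 3 k (by omega)]
    have hd := hdiam_le A B
    rw [JGaux.dist_formula hk A B, hABcard] at hd
    omega
  rcases hcase with rfl | rfl
  · exact JGaux.stackable_k2 (by omega) r
  · exact JGaux.stackable_mk2 hk2 r
end

section
/- For every n ≥ 1 there exists a function φ, defined on the family of subsets X of {1,…,n} with 2|X| > n, such that φ is injective and, for every such X, φ(X) ⊆ X and |φ(X)| = |X| − 1 (so in particular |φ(X)| ≥ ⌊n/2⌋). -/
open Finset

theorem symmetric_chain_injection (n : ℕ) (hn : 1 ≤ n) :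
    ∃ φ : Finset (Fin n) → Finset (Fin n),
      (∀ X Y : Finset (Fin n), n < 2 * X.card → n < 2 * Y.card → φ X = φ Y → X = Y) ∧
      (∀ X : Finset (Fin n), n < 2 * X.card →
        φ X ⊆ X ∧ (φ X).card = X.card - 1 ∧ n / 2 ≤ (φ X).card) := by
  classical
  have key : ∀ k : ℕ, ∃ f : Finset (Fin n) → Finset (Fin n),
      (∀ X Y, X.card = k → Y.card = k → f X = f Y → X = Y) ∧
      (∀ X, X.card = k → n < 2 * k → f X ∈ X.image X.erase) := by
    intro k
    by_cases hk : n < 2 * k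
    · -- use Hall's theorem on the layer of sets of card k
      have hall : ∀ A : Finset {X : Finset (Fin n) // X.card = k},
          A.card ≤ (A.biUnion (fun X => X.1.image X.1.erase)).card := by
        intro A
        set B : Finset (Finset (Fin n)) := A.image Subtype.val with hB
        have hBcard : B.card = A.card := card_image_of_injective _ Subtype.val_injective
        have hSized : (B : Set (Finset (Fin n))).Sized k := by
          intro s hs
          simp only [hB, coe_image, Set.mem_image, mem_coe] at hs
          obtain ⟨x, _, rfl⟩ := hs
          exact x.2
        have hLYM := Finset.card_mul_le_card_shadow_mul hSized
        rw [Fintype.card_fin] at hLYM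
        have hshadow : A.biUnion (fun X => X.1.image X.1.erase) = Finset.shadow B := by
          rw [Finset.shadow, hB, Finset.sup_image, Finset.sup_eq_biUnion]
          rfl
        rw [hshadow, ← hBcard]
        have hk1 : 1 ≤ k := by omega
        have h2 : n - k + 1 ≤ k := by omega
        have := hLYM.trans (Nat.mul_le_mul_left _ h2)
        exact Nat.le_of_mul_le_mul_right this hk1
      obtain ⟨f, hfinj, hfmem⟩ :=
        (Finset.all_card_le_biUnion_card_iff_exists_injective
          (fun X : {X : Finset (Fin n) // X.card = k} => X.1.image X.1.erase)).mp hall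
      refine ⟨fun X => if h : X.card = k then f ⟨X, h⟩ else ∅, ?_, ?_⟩
      · intro X Y hX hY hXY
        simp only [dif_pos hX, dif_pos hY] at hXY
        exact Subtype.ext_iff.mp (hfinj hXY)
      · intro X hX _
        simp only [dif_pos hX]
        exact hfmem ⟨X, hX⟩
    · exact ⟨id, fun X Y _ _ h => h, fun X _ h => absurd h hk⟩
  choose F hFinj hFmem using key
  refine ⟨fun X => F X.card X, ?_, ?_⟩
  · intro X Y hX hY hXY
    dsimp only at hXY
    have hXm := hFmem X.card X rfl hX
    have hYm := hFmem Y.card Y rfl hY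
    simp only [mem_image] at hXm hYm
    obtain ⟨a, ha, hae⟩ := hXm
    obtain ⟨b, hb, hbe⟩ := hYm
    have hcX : (F X.card X).card = X.card - 1 := by
      rw [← hae]; exact card_erase_of_mem ha
    have hcY : (F Y.card Y).card = Y.card - 1 := by
      rw [← hbe]; exact card_erase_of_mem hb
    have hcard : X.card = Y.card := by
      have := congrArg Finset.card hXY
      rw [hcX, hcY] at this
      omega
    exact hFinj X.card X Y rfl (hcard.symm) (by rw [hXY, hcard])
  · intro X hX
    dsimp only
    have hXm := hFmem X.card X rfl hX
    simp only [mem_image] at hXm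
    obtain ⟨a, ha, hae⟩ := hXm
    have hc : (F X.card X).card = X.card - 1 := by
      rw [← hae]; exact card_erase_of_mem ha
    refine ⟨?_, hc, ?_⟩
    · rw [← hae]; exact erase_subset _ _
    · omega
end

section
/- For every l ≤ 3 and every d ≥ l + 4, every level-l 4-cube in the hypercube Q^d is 0-stackable: for all disjoint subsets S, K of {1,…,d} with |S| = l and |K| = 4, letting A = {X : S ⊆ X ⊆ S ∪ K} and letting C_A be the configuration with one cup on each vertex of A ∪ {∅} and no cups elsewhere, Q^d is (C_A, ∅)-stackable. -/
open scoped symmDiff in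
/-- The d-dimensional hypercube: vertices are subsets of {1,…,d}, adjacent iff
the symmetric difference has exactly one element. -/
def cubeGraph (d : ℕ) : SimpleGraph (Finset (Fin d)) :=
  SimpleGraph.fromRel (fun X Y => (X ∆ Y).card = 1)

open scoped symmDiff

/-! ### Distance in the hypercube -/

lemma cube_adj {d : ℕ} {X Y : Finset (Fin d)} :
    (cubeGraph d).Adj X Y ↔ (X ∆ Y).card = 1 := by
  constructor
  · rintro ⟨hne, h | h⟩
    · exact h
    · rwa [symmDiff_comm]
  · intro h
    refine ⟨?_, Or.inl h⟩
    rintro rfl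
    simp [symmDiff_self] at h

lemma symmDiff_singleton_of_mem {d : ℕ} {A : Finset (Fin d)} {i : Fin d} (hi : i ∈ A) :
    A ∆ {i} = A.erase i := by
  ext j
  simp only [Finset.mem_symmDiff, Finset.mem_singleton, Finset.mem_erase]
  by_cases hj : j = i
  · subst hj; simp [hi]
  · simp [hj]

lemma cube_exists_walk {d : ℕ} (X Y : Finset (Fin d)) :
    ∃ w : (cubeGraph d).Walk X Y, w.length = (X ∆ Y).card := by
  generalize hn : (X ∆ Y).card = n
  induction n generalizing X with
  | zero =>
    have : X = Y := by
      rw [Finset.card_eq_zero] at hn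
      simpa [symmDiff_eq_bot] using hn
    subst this
    exact ⟨SimpleGraph.Walk.nil, rfl⟩
  | succ n ih =>
    obtain ⟨i, hi⟩ : (X ∆ Y).Nonempty := by rw [← Finset.card_pos, hn]; omega
    have hadj : (cubeGraph d).Adj X (X ∆ {i}) := by
      rw [cube_adj, symmDiff_symmDiff_cancel_left, Finset.card_singleton]
    have hcard : ((X ∆ {i}) ∆ Y).card = n := by
      have h1 : (X ∆ {i}) ∆ Y = (X ∆ Y) ∆ {i} := by
        rw [symmDiff_assoc, symmDiff_assoc, symmDiff_comm {i} Y]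
      rw [h1, symmDiff_singleton_of_mem hi, Finset.card_erase_of_mem hi, hn]; omega
    obtain ⟨w, hw⟩ := ih (X ∆ {i}) hcard
    exact ⟨SimpleGraph.Walk.cons hadj w, by simp [hw]⟩

lemma card_symmDiff_le_length {d : ℕ} {X Y : Finset (Fin d)}
    (w : (cubeGraph d).Walk X Y) : (X ∆ Y).card ≤ w.length := by
  induction w with
  | nil => simp
  | @cons u v y h p ih =>
    have h1 : (u ∆ v).card = 1 := cube_adj.mp h
    have htri : (u ∆ y).card ≤ (u ∆ v).card + (v ∆ y).card :=
      le_trans (Finset.card_le_card (symmDiff_triangle u v y)) (Finset.card_union_le _ _)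
    simp only [SimpleGraph.Walk.length_cons]
    omega

lemma cube_dist {d : ℕ} (X Y : Finset (Fin d)) :
    (cubeGraph d).dist X Y = (X ∆ Y).card := by
  obtain ⟨w, hw⟩ := cube_exists_walk X Y
  refine le_antisymm (hw ▸ SimpleGraph.dist_le w) ?_
  obtain ⟨p, hp⟩ := SimpleGraph.Reachable.exists_walk_length_eq_dist ⟨w⟩
  exact hp ▸ card_symmDiff_le_length p

/-! ### Lifting abstract plans to cup-stacking sequences -/

open Classical in
noncomputable def liftConf {V n : Type*} (f : n → V) (c : n → ℕ) : V → ℕ :=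
  fun w => if h : ∃ i, f i = w then c h.choose else 0

lemma liftConf_apply {V n : Type*} {f : n → V} (hf : Function.Injective f)
    (c : n → ℕ) (i : n) : liftConf f c (f i) = c i := by
  unfold liftConf
  rw [dif_pos ⟨i, rfl⟩]
  congr 1
  exact hf (Exists.choose_spec (⟨i, rfl⟩ : ∃ j, f j = f i))

lemma liftConf_not_mem {V n : Type*} {f : n → V} {c : n → ℕ} {w : V}
    (h : ¬ ∃ i, f i = w) : liftConf f c w = 0 := dif_neg h

def runPlan {n : Type*} [DecidableEq n] (D : n → n → ℕ) :
    List (n × n) → (n → ℕ) → Option (n → ℕ)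
  | [], c => some c
  | (u, v) :: rest, c =>
    if u ≠ v ∧ 1 ≤ c u ∧ 1 ≤ c v ∧ D u v = c u then
      runPlan D rest (fun w => if w = u then 0 else if w = v then c u + c v else c w)
    else none

lemma runPlan_reflTrans {V n : Type*} [Fintype V] [DecidableEq V] [DecidableEq n]
    (G : SimpleGraph V) (f : n → V) (hf : Function.Injective f)
    (D : n → n → ℕ) (hD : ∀ i j, G.dist (f i) (f j) = D i j) :
    ∀ (plan : List (n × n)) (c c' : n → ℕ), runPlan D plan c = some c' →
      Relation.ReflTransGen (CupMove G) (liftConf f c) (liftConf f c')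
  | [], c, c', h => by
    simp only [runPlan, Option.some.injEq] at h
    exact h ▸ Relation.ReflTransGen.refl
  | (u, v) :: rest, c, c', h => by
    rw [runPlan] at h
    split at h
    case isFalse => exact absurd h (by simp)
    case isTrue hc =>
      obtain ⟨huv, h1, h2, hd⟩ := hc
      refine Relation.ReflTransGen.head ?_ (runPlan_reflTrans G f hf D hD rest _ c' h)
      refine ⟨f u, f v, fun e => huv (hf e), ?_, ?_, ?_, ?_⟩
      · rw [liftConf_apply hf]; exact h1
      · rw [liftConf_apply hf]; exact h2
      · rw [liftConf_apply hf, hD]; exact hd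
      · intro w
        by_cases hw : ∃ i, f i = w
        · obtain ⟨k, rfl⟩ := hw
          simp only [liftConf_apply hf, hf.eq_iff]
        · have hu : w ≠ f u := fun e => hw ⟨u, e.symm⟩
          have hv : w ≠ f v := fun e => hw ⟨v, e.symm⟩
          simp only [liftConf_not_mem hw, if_neg hu, if_neg hv]

lemma sum_liftConf {V n : Type*} [Fintype V] [Fintype n] [DecidableEq V]
    {f : n → V} (hf : Function.Injective f) (c : n → ℕ) :
    ∑ w, liftConf f c w = ∑ i, c i := by
  have h1 : ∑ w ∈ Finset.univ.image f, liftConf f c w = ∑ w, liftConf f c w := by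
    apply Finset.sum_subset (Finset.subset_univ _)
    intro w _ hw
    apply liftConf_not_mem
    rintro ⟨i, rfl⟩
    exact hw (Finset.mem_image_of_mem f (Finset.mem_univ i))
  rw [← h1, Finset.sum_image (fun a _ b _ e => hf e)]
  simp [liftConf_apply hf]

lemma stackable_of_plan {V n : Type*} [Fintype V] [Fintype n] [DecidableEq V] [DecidableEq n]
    (G : SimpleGraph V) (f : n → V) (hf : Function.Injective f) (r : n)
    (D : n → n → ℕ) (hD : ∀ i j, G.dist (f i) (f j) = D i j)
    (c : n → ℕ) (plan : List (n × n)) (N : ℕ) (hN : ∑ j, c j = N)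
    (hrun : runPlan D plan c = some (fun i => if i = r then N else 0)) :
    IsStackableConf G (liftConf f c) (f r) := by
  unfold IsStackableConf
  have H := runPlan_reflTrans G f hf D hD plan c _ hrun
  have heq : (fun w => if w = f r then ∑ v, liftConf f c v else 0)
      = liftConf f (fun i => if i = r then N else 0) := by
    funext w
    by_cases hw : ∃ i, f i = w
    · obtain ⟨k, rfl⟩ := hw
      rw [liftConf_apply hf]
      simp [hf.eq_iff, sum_liftConf hf, hN]
    · have hu : w ≠ f r := fun e => hw ⟨r, e.symm⟩
      rw [liftConf_not_mem hw, if_neg hu]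
  rw [heq]
  exact H

lemma option_eq_some_of {α : Type*} (o : Option α) (dflt a : α)
    (h1 : o.isSome) (h2 : o.getD dflt = a) : o = some a := by
  cases o <;> simp_all

/-! ### Instantiation for the level-l 4-cube -/

lemma exists_embed {d : ℕ} (K : Finset (Fin d)) (hK : K.card = 4) :
    ∃ e : Fin 4 → Fin d, Function.Injective e ∧ Finset.univ.image e = K := by
  let eqv := K.equivFinOfCardEq hK
  refine ⟨fun i => (eqv.symm i : Fin d), fun i j h => eqv.symm.injective (Subtype.ext h), ?_⟩
  apply Finset.eq_of_subset_of_card_le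
  · intro x hx
    obtain ⟨i, -, rfl⟩ := Finset.mem_image.mp hx
    exact (eqv.symm i).2
  · rw [hK, Finset.card_image_of_injective _ (fun i j h => eqv.symm.injective (Subtype.ext h))]
    simp

lemma union_symmDiff_union {α : Type*} [DecidableEq α] {S A B : Finset α}
    (hA : Disjoint S A) (hB : Disjoint S B) : (S ∪ A) ∆ (S ∪ B) = A ∆ B := by
  ext i
  simp only [Finset.mem_symmDiff, Finset.mem_union]
  have h1 : i ∈ S → i ∉ A := fun h => Finset.disjoint_left.mp hA h
  have h2 : i ∈ S → i ∉ B := fun h => Finset.disjoint_left.mp hB h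
  tauto

def Dl (l : ℕ) : Option (Finset (Fin 4)) → Option (Finset (Fin 4)) → ℕ
  | some T, some T' => (T ∆ T').card
  | some T, none => l + T.card
  | none, some T => l + T.card
  | none, none => 0

def D0 (T T' : Finset (Fin 4)) : ℕ := (T ∆ T').card

lemma aux_pos (l d : ℕ) (hl : 1 ≤ l) (S K : Finset (Fin d)) (hdisj : Disjoint S K)
    (hS : S.card = l) (hK : K.card = 4)
    (plan : List (Option (Finset (Fin 4)) × Option (Finset (Fin 4))))
    (hrun : runPlan (Dl l) plan (fun _ => 1)
      = some (fun i => if i = none then 17 else 0)) :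
    IsStackableConf (cubeGraph d)
      (fun X => if (S ⊆ X ∧ X ⊆ S ∪ K) ∨ X = ∅ then 1 else 0) ∅ := by
  obtain ⟨e, he, hKe⟩ := exists_embed K hK
  set f : Option (Finset (Fin 4)) → Finset (Fin d) :=
    fun o => o.elim ∅ (fun T => S ∪ T.image e) with hfdef
  have himK : ∀ T : Finset (Fin 4), T.image e ⊆ K := fun T =>
    hKe ▸ Finset.image_subset_image (Finset.subset_univ T)
  have hdisj' : ∀ T : Finset (Fin 4), Disjoint S (T.image e) := fun T =>
    hdisj.mono_right (himK T)
  have hSne : S ≠ ∅ := by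
    intro h
    rw [h, Finset.card_empty] at hS
    omega
  have hinj : Function.Injective f := by
    rintro (_ | T) (_ | T') h
    · rfl
    · exact absurd (Finset.union_eq_empty.mp h.symm).1 hSne
    · exact absurd (Finset.union_eq_empty.mp h).1 hSne
    · have h' : T.image e = T'.image e := by
        have h2 : S ∪ T.image e = S ∪ T'.image e := h
        rw [← Finset.union_sdiff_cancel_left (hdisj' T), h2,
          Finset.union_sdiff_cancel_left (hdisj' T')]
      rw [Finset.image_injective he h']
  have hD : ∀ i j, (cubeGraph d).dist (f i) (f j) = Dl l i j := by
    rintro (_ | T) (_ | T')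
    · show (cubeGraph d).dist ∅ ∅ = 0
      rw [cube_dist, symmDiff_self]; rfl
    · show (cubeGraph d).dist ∅ (S ∪ T'.image e) = l + T'.card
      rw [cube_dist, symmDiff_comm, ← Finset.bot_eq_empty, symmDiff_bot,
        Finset.card_union_of_disjoint (hdisj' T'), hS,
        Finset.card_image_of_injective _ he]
    · show (cubeGraph d).dist (S ∪ T.image e) ∅ = l + T.card
      rw [cube_dist, ← Finset.bot_eq_empty, symmDiff_bot,
        Finset.card_union_of_disjoint (hdisj' T), hS,
        Finset.card_image_of_injective _ he]
    · show (cubeGraph d).dist (S ∪ T.image e) (S ∪ T'.image e) = (T ∆ T').card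
      rw [cube_dist, union_symmDiff_union (hdisj' T) (hdisj' T'),
        ← Finset.image_symmDiff _ _ he, Finset.card_image_of_injective _ he]
  have hCeq : (fun X => if (S ⊆ X ∧ X ⊆ S ∪ K) ∨ X = ∅ then (1:ℕ) else 0)
      = liftConf f (fun _ => 1) := by
    funext X
    by_cases hX : ∃ i, f i = X
    · obtain ⟨k, rfl⟩ := hX
      rw [liftConf_apply hinj]
      cases k with
      | none =>
        show (if (S ⊆ (∅ : Finset (Fin d)) ∧ (∅ : Finset (Fin d)) ⊆ S ∪ K)
          ∨ (∅ : Finset (Fin d)) = ∅ then (1:ℕ) else 0) = 1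
        simp
      | some T =>
        have h1 : S ⊆ S ∪ T.image e := Finset.subset_union_left
        have h2 : S ∪ T.image e ⊆ S ∪ K := Finset.union_subset_union_right (himK T)
        show (if (S ⊆ S ∪ T.image e ∧ S ∪ T.image e ⊆ S ∪ K) ∨ S ∪ T.image e = ∅
          then (1:ℕ) else 0) = 1
        simp [h1, h2]
    · rw [liftConf_not_mem hX, if_neg]
      rintro (⟨h1, h2⟩ | rfl)
      · have hsub : X ∩ K ⊆ Finset.univ.image e := by
          rw [hKe]; exact Finset.inter_subset_right
        obtain ⟨T, -, hT⟩ := Finset.subset_image_iff.mp hsub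
        apply hX
        refine ⟨some T, ?_⟩
        show S ∪ T.image e = X
        rw [hT]
        apply Finset.Subset.antisymm
        · exact Finset.union_subset h1 Finset.inter_subset_left
        · intro x hx
          rcases Finset.mem_union.mp (h2 hx) with h | h
          · exact Finset.mem_union_left _ h
          · exact Finset.mem_union_right _ (Finset.mem_inter.mpr ⟨hx, h⟩)
      · exact hX ⟨none, rfl⟩
  have hsum : (∑ _j : Option (Finset (Fin 4)), (1:ℕ)) = 17 := by
    simp [Finset.card_univ]
  have H := stackable_of_plan (cubeGraph d) f hinj none (Dl l) hD
    (fun _ => 1) plan 17 hsum hrun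
  rw [hCeq]
  exact H

lemma aux_zero (d : ℕ) (S K : Finset (Fin d)) (hdisj : Disjoint S K)
    (hS : S.card = 0) (hK : K.card = 4)
    (plan : List (Finset (Fin 4) × Finset (Fin 4)))
    (hrun : runPlan D0 plan (fun _ => 1)
      = some (fun i => if i = ∅ then 16 else 0)) :
    IsStackableConf (cubeGraph d)
      (fun X => if (S ⊆ X ∧ X ⊆ S ∪ K) ∨ X = ∅ then 1 else 0) ∅ := by
  obtain ⟨e, he, hKe⟩ := exists_embed K hK
  have hS0 : S = ∅ := Finset.card_eq_zero.mp hS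
  set f : Finset (Fin 4) → Finset (Fin d) := fun T => S ∪ T.image e with hfdef
  have himK : ∀ T : Finset (Fin 4), T.image e ⊆ K := fun T =>
    hKe ▸ Finset.image_subset_image (Finset.subset_univ T)
  have hdisj' : ∀ T : Finset (Fin 4), Disjoint S (T.image e) := fun T =>
    hdisj.mono_right (himK T)
  have hinj : Function.Injective f := by
    intro T T' h
    have h' : T.image e = T'.image e := by
      have h2 : S ∪ T.image e = S ∪ T'.image e := h
      rw [← Finset.union_sdiff_cancel_left (hdisj' T), h2,
        Finset.union_sdiff_cancel_left (hdisj' T')]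
    exact Finset.image_injective he h'
  have hD : ∀ i j, (cubeGraph d).dist (f i) (f j) = D0 i j := by
    intro T T'
    show (cubeGraph d).dist (S ∪ T.image e) (S ∪ T'.image e) = (T ∆ T').card
    rw [cube_dist, union_symmDiff_union (hdisj' T) (hdisj' T'),
      ← Finset.image_symmDiff _ _ he, Finset.card_image_of_injective _ he]
  have hCeq : (fun X => if (S ⊆ X ∧ X ⊆ S ∪ K) ∨ X = ∅ then (1:ℕ) else 0)
      = liftConf f (fun _ => 1) := by
    funext X
    by_cases hX : ∃ i, f i = X
    · obtain ⟨T, rfl⟩ := hX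
      rw [liftConf_apply hinj]
      have h1 : S ⊆ S ∪ T.image e := Finset.subset_union_left
      have h2 : S ∪ T.image e ⊆ S ∪ K := Finset.union_subset_union_right (himK T)
      show (if (S ⊆ S ∪ T.image e ∧ S ∪ T.image e ⊆ S ∪ K) ∨ S ∪ T.image e = ∅
        then (1:ℕ) else 0) = 1
      simp [h1, h2]
    · rw [liftConf_not_mem hX, if_neg]
      rintro (⟨h1, h2⟩ | rfl)
      · have hsub : X ∩ K ⊆ Finset.univ.image e := by
          rw [hKe]; exact Finset.inter_subset_right
        obtain ⟨T, -, hT⟩ := Finset.subset_image_iff.mp hsub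
        apply hX
        refine ⟨T, ?_⟩
        show S ∪ T.image e = X
        rw [hT]
        apply Finset.Subset.antisymm
        · exact Finset.union_subset h1 Finset.inter_subset_left
        · intro x hx
          rcases Finset.mem_union.mp (h2 hx) with h | h
          · exact Finset.mem_union_left _ h
          · exact Finset.mem_union_right _ (Finset.mem_inter.mpr ⟨hx, h⟩)
      · refine hX ⟨∅, ?_⟩
        show S ∪ Finset.image e ∅ = ∅
        simp [hS0]
  have hsum : (∑ _j : Finset (Fin 4), (1:ℕ)) = 16 := by
    simp [Finset.card_univ, Fintype.card_finset]
  have H := stackable_of_plan (cubeGraph d) f hinj ∅ D0 hD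
    (fun _ => 1) plan 16 hsum hrun
  rw [hCeq]
  have hroot : f ∅ = ∅ := by show S ∪ Finset.image e ∅ = ∅; simp [hS0]
  rwa [hroot] at H

def plan0 : List (Finset (Fin 4) × Finset (Fin 4)) :=
  [({0,1,2,3},{0,1,2}), ({0,1,2},{0,1,3}), ({0,1,3},∅),
   ({0,2,3},{0,2}), ({1,2,3},{1,2}),
   ({0},{0,1}), ({3},{0,3}), ({1},{1,3}), ({2},{2,3}),
   ({0,2},∅), ({1,2},∅), ({0,1},∅), ({0,3},∅), ({1,3},∅), ({2,3},∅)]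

def plan1 : List (Option (Finset (Fin 4)) × Option (Finset (Fin 4))) :=
  [(some {0,1}, some {0}), (some {1,2}, some {1}), (some {2,3}, some {2}), (some {0,3}, some {3}),
   (some {0,1,2}, some {0,2}), (some {0,2,3}, some {0,2}),
   (some {1,3}, some {1,2,3}), (some {1,2,3}, some {0,1,3}), (some {0,1,2,3}, some {0,1,3}),
   (some ∅, none), (some {0}, none), (some {1}, none), (some {2}, none), (some {3}, none),
   (some {0,2}, none), (some {0,1,3}, none)]

def plan2 : List (Option (Finset (Fin 4)) × Option (Finset (Fin 4))) :=
  [(some {0}, some ∅), (some ∅, none),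
   (some {0,1}, some {1}), (some {1,2}, some {1}), (some {1}, none),
   (some {0,2}, some {2}), (some {2,3}, some {2}), (some {2}, none),
   (some {3}, some {0,3}), (some {0,1,3}, some {0,3}), (some {0,2,3}, some {0,3}), (some {0,3}, none),
   (some {0,1,2,3}, some {1,2,3}), (some {1,2,3}, some {0,1,2}), (some {0,1,2}, some {1,3}), (some {1,3}, none)]

def plan3 : List (Option (Finset (Fin 4)) × Option (Finset (Fin 4))) :=
  [(some {0}, some ∅), (some {1}, some ∅), (some ∅, none),
   (some {0,3}, some {3}), (some {1,3}, some {3}), (some {2,3}, some {3}), (some {3}, none),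
   (some {1,2}, some {2}), (some {0,2}, some {0,2,3}), (some {0,2,3}, some {2}), (some {2}, none),
   (some {0,1,2}, some {0,1}), (some {0,1,3}, some {0,1}), (some {1,2,3}, some {0,1,2,3}),
   (some {0,1,2,3}, some {0,1}), (some {0,1}, none)]

theorem levelFourCube_stackable (l d : ℕ) (hl : l ≤ 3) (hd : l + 4 ≤ d)
    (S K : Finset (Fin d)) (hdisj : Disjoint S K) (hS : S.card = l) (hK : K.card = 4) :
    IsStackableConf (cubeGraph d)
      (fun X => if (S ⊆ X ∧ X ⊆ S ∪ K) ∨ X = ∅ then 1 else 0) ∅ := by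
  interval_cases l
  · exact aux_zero d S K hdisj hS hK plan0
      (option_eq_some_of _ (fun _ => 0) _ (by decide) (by decide))
  · exact aux_pos 1 d (by norm_num) S K hdisj hS hK plan1
      (option_eq_some_of _ (fun _ => 0) _ (by decide) (by decide))
  · exact aux_pos 2 d (by norm_num) S K hdisj hS hK plan2
      (option_eq_some_of _ (fun _ => 0) _ (by decide) (by decide))
  · exact aux_pos 3 d (by norm_num) S K hdisj hS hK plan3
      (option_eq_some_of _ (fun _ => 0) _ (by decide) (by decide))
end
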